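/- arXiv:1312.2166 — 8 statements merged into one kernel-verified Lean document; each statement's English description precedes it below -/
import Mathlib

section
/- Let M be a positive integer and let α₀, α₁, …, α_M be a log-concave sequence of nonnegative real numbers. Then the function g(x) = Σ_{i=0}^{M} αᵢ · (M choose i) · (1-x)^i · x^{M-i} is log-concave in x on the interval (0, 1). -/
open Real Set

/-- A nonnegative function is log-concave on a set if
`f (λx + (1-λ)y) ≥ f x ^ λ * f y ^ (1-λ)` for all `x, y` in the set and `0 < λ < 1`. -/
def IsLogConcaveOn (S : Set ℝ) (f : ℝ → ℝ) : Prop :=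
  ∀ x ∈ S, ∀ y ∈ S, ∀ l : ℝ, 0 < l → l < 1 →
    f x ^ l * f y ^ (1 - l) ≤ f (l * x + (1 - l) * y)

namespace LogConcaveMixtureAux

/-- The shifted Bernstein-type sum. -/
noncomputable def F (α : ℕ → ℝ) (N k : ℕ) (x : ℝ) : ℝ :=
  ∑ i ∈ Finset.range (N + 1), α (i + k) * (N.choose i : ℝ) * (1 - x) ^ i * x ^ (N - i)

lemma F_zero (α : ℕ → ℝ) (k : ℕ) (x : ℝ) : F α 0 k x = α k := by
  simp [F]

/-- Pascal recursion. -/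
lemma F_succ (α : ℕ → ℝ) (N k : ℕ) (x : ℝ) :
    F α (N + 1) k x = (1 - x) * F α N (k + 1) x + x * F α N k x := by
  unfold F
  rw [Finset.sum_range_succ' (fun i => α (i + k) * ((N+1).choose i : ℝ) * (1 - x) ^ i * x ^ (N + 1 - i)) (N+1)]
  have h1 : ∀ i ∈ Finset.range (N+1),
      α (i + 1 + k) * (((N+1).choose (i+1) : ℕ) : ℝ) * (1 - x) ^ (i+1) * x ^ (N + 1 - (i+1))
      = (1-x) * (α (i + (k+1)) * (N.choose i : ℝ) * (1 - x) ^ i * x ^ (N - i))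
        + α (i + 1 + k) * (N.choose (i+1) : ℝ) * (1 - x) ^ (i+1) * x ^ (N - i) := by
    intro i hi
    have : (N + 1) - (i + 1) = N - i := by omega
    rw [this, Nat.choose_succ_succ']
    have : i + 1 + k = i + (k + 1) := by omega
    rw [this]
    push_cast
    ring
  rw [Finset.sum_congr rfl h1, Finset.sum_add_distrib, ← Finset.mul_sum]
  have h2 : (∑ i ∈ Finset.range (N+1),
      α (i + 1 + k) * (N.choose (i+1) : ℝ) * (1 - x) ^ (i+1) * x ^ (N - i))
      + α (0 + k) * (((N+1).choose 0 : ℕ) : ℝ) * (1 - x) ^ 0 * x ^ (N + 1 - 0)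
      = x * ∑ i ∈ Finset.range (N + 1), α (i + k) * (N.choose i : ℝ) * (1 - x) ^ i * x ^ (N - i) := by
    rw [Finset.mul_sum]
    rw [Finset.sum_range_succ (fun i => α (i + 1 + k) * (N.choose (i+1) : ℝ) * (1 - x) ^ (i+1) * x ^ (N - i)) N]
    simp only [Nat.choose_succ_self, Nat.cast_zero, mul_zero, zero_mul, add_zero]
    rw [Finset.sum_range_succ' (fun i => x * (α (i + k) * (N.choose i : ℝ) * (1 - x) ^ i * x ^ (N - i))) N]
    congr 1
    · apply Finset.sum_congr rfl
      intro i hi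
      simp only [Finset.mem_range] at hi
      have hx : x ^ (N - i) = x ^ (N - (i+1)) * x := by
        rw [← pow_succ]
        congr 1
        omega
      rw [hx]
      ring
    · simp [pow_succ]
      ring
  rw [add_assoc, h2]

lemma F_nonneg (α : ℕ → ℝ) (M : ℕ) (hα : ∀ i ≤ M, 0 ≤ α i) (N k : ℕ) (hNk : N + k ≤ M)
    {x : ℝ} (hx0 : 0 ≤ x) (hx1 : x ≤ 1) : 0 ≤ F α N k x := by
  apply Finset.sum_nonneg
  intro i hi
  simp only [Finset.mem_range] at hi
  have h0 : 0 ≤ α (i + k) := hα _ (by omega)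
  have h1 : (0:ℝ) ≤ 1 - x := by linarith
  positivity

/-- Key lemma: log-concavity of the shift. -/
lemma F_shift_logconcave (α : ℕ → ℝ) (M : ℕ)
    (hlc : ∀ i j : ℕ, 1 ≤ i → i ≤ j → j + 1 ≤ M → α (i - 1) * α (j + 1) ≤ α i * α j) :
    ∀ N k l : ℕ, 1 ≤ k → k ≤ l + 1 → l + 1 + N ≤ M → ∀ x : ℝ, 0 ≤ x → x ≤ 1 →
      F α N (k - 1) x * F α N (l + 1) x ≤ F α N k x * F α N l x := by
  intro N
  induction N with
  | zero =>
    intro k l hk hkl hlM x hx0 hx1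
    rw [F_zero, F_zero, F_zero, F_zero]
    rcases Nat.lt_or_ge k (l + 1) with h | h
    · exact hlc k l hk (by omega) (by omega)
    · have : k = l + 1 := by omega
      subst this
      simp only [Nat.add_sub_cancel]
      ring_nf
      exact le_rfl
  | succ N ih =>
    intro k l hk hkl hlM x hx0 hx1
    rcases Nat.lt_or_ge k (l + 1) with hcase | hcase
    · -- k ≤ l
      have hkl' : k ≤ l := by omega
      rw [F_succ, F_succ, F_succ, F_succ]
      have hk1 : k - 1 + 1 = k := by omega
      rw [hk1]
      set u : ℝ := 1 - x with hu
      have hu0 : 0 ≤ u := by simp [hu]; linarith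
      set f0 := F α N (k - 1) x
      set f1 := F α N k x
      set f2 := F α N (k + 1) x
      set g0 := F α N l x
      set g1 := F α N (l + 1) x
      set g2 := F α N (l + 2) x
      -- IH instances
      have I1 : f1 * g2 ≤ f2 * g1 := by
        have := ih (k+1) (l+1) (by omega) (by omega) (by omega) x hx0 hx1
        simpa [Nat.add_sub_cancel] using this
      have I2 : f0 * g1 ≤ f1 * g0 := ih k l hk (by omega) (by omega) x hx0 hx1
      have I3 : f0 * g2 ≤ f1 * g1 := by
        have := ih k (l+1) hk (by omega) (by omega) x hx0 hx1
        simpa using this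
      have I4 : f1 * g1 ≤ f2 * g0 := by
        have := ih (k+1) l (by omega) (by omega) (by omega) x hx0 hx1
        simpa [Nat.add_sub_cancel] using this
      have I5 : f0 * g2 ≤ f2 * g0 := le_trans I3 I4
      have e1 : (u * f1 + x * f0) * (u * g2 + x * g1)
          = u^2 * (f1 * g2) + (u*x) * (f0 * g2) + (u*x) * (f1 * g1) + x^2 * (f0 * g1) := by ring
      have e2 : (u * f2 + x * f1) * (u * g1 + x * g0)
          = u^2 * (f2 * g1) + (u*x) * (f2 * g0) + (u*x) * (f1 * g1) + x^2 * (f1 * g0) := by ring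
      rw [e1, e2]
      have hux : 0 ≤ u * x := mul_nonneg hu0 hx0
      have hu2 : (0:ℝ) ≤ u^2 := sq_nonneg u
      have hx2 : (0:ℝ) ≤ x^2 := sq_nonneg x
      exact add_le_add (add_le_add (add_le_add (mul_le_mul_of_nonneg_left I1 hu2)
        (mul_le_mul_of_nonneg_left I5 hux)) le_rfl) (mul_le_mul_of_nonneg_left I2 hx2)
    · have : k = l + 1 := by omega
      subst this
      simp only [Nat.add_sub_cancel]
      ring_nf
      exact le_rfl

lemma hasDerivAt_F (α : ℕ → ℝ) (N k : ℕ) (x : ℝ) :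
    HasDerivAt (F α (N + 1) k) ((N + 1 : ℝ) * (F α N k x - F α N (k + 1) x)) x := by
  have hterm : ∀ i ∈ Finset.range (N + 2),
      HasDerivAt (fun y : ℝ => α (i + k) * ((N+1).choose i : ℝ) * (1 - y) ^ i * y ^ (N + 1 - i))
        (α (i + k) * ((N+1).choose i : ℝ) *
          ((N + 1 - i : ℕ) * ((1 - x) ^ i * x ^ (N - i)) - (i:ℝ) * ((1 - x) ^ (i - 1) * x ^ (N + 1 - i)))) x := by
    intro i hi
    simp only [Finset.mem_range] at hi
    have h1 : HasDerivAt (fun y : ℝ => (1 - y)) (-1) x := by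
      simpa using (hasDerivAt_id x).const_sub 1
    have h2 : HasDerivAt (fun y : ℝ => (1 - y) ^ i) ((i:ℝ) * (1 - x) ^ (i - 1) * (-1)) x := h1.pow i
    have h3 : HasDerivAt (fun y : ℝ => y ^ (N + 1 - i)) ((N + 1 - i : ℕ) * x ^ (N + 1 - i - 1)) x :=
      hasDerivAt_pow (N + 1 - i) x
    have h4 := (h2.mul h3).const_mul (α (i + k) * ((N+1).choose i : ℝ))
    have he : N + 1 - i - 1 = N - i := by omega
    rw [he] at h4
    have h5 : (fun y : ℝ => α (i + k) * ((N+1).choose i : ℝ) * (1 - y) ^ i * y ^ (N + 1 - i))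
        = (fun y : ℝ => α (i + k) * ((N+1).choose i : ℝ) * ((1 - y) ^ i * y ^ (N + 1 - i))) := by
      funext y; ring
    rw [h5]
    refine h4.congr_deriv ?_
    ring
  have hsum := HasDerivAt.fun_sum hterm
  have : (fun y : ℝ => ∑ i ∈ Finset.range (N + 2),
      α (i + k) * ((N+1).choose i : ℝ) * (1 - y) ^ i * y ^ (N + 1 - i)) = F α (N+1) k := rfl
  rw [this] at hsum
  refine hsum.congr_deriv ?_
  -- now the sum identity
  have hsplit : ∑ i ∈ Finset.range (N + 2), α (i + k) * ((N+1).choose i : ℝ) *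
        ((N + 1 - i : ℕ) * ((1 - x) ^ i * x ^ (N - i)) - (i:ℝ) * ((1 - x) ^ (i - 1) * x ^ (N + 1 - i)))
      = (∑ i ∈ Finset.range (N + 2), α (i + k) * ((N+1).choose i : ℝ) * (N + 1 - i : ℕ) * ((1 - x) ^ i * x ^ (N - i)))
        - ∑ i ∈ Finset.range (N + 2), α (i + k) * ((N+1).choose i : ℝ) * (i:ℝ) * ((1 - x) ^ (i - 1) * x ^ (N + 1 - i)) := by
    rw [← Finset.sum_sub_distrib]
    apply Finset.sum_congr rfl
    intro i hi
    ring
  rw [hsplit]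
  have hS2 : ∑ i ∈ Finset.range (N + 2), α (i + k) * ((N+1).choose i : ℝ) * (N + 1 - i : ℕ) * ((1 - x) ^ i * x ^ (N - i))
      = (N + 1 : ℝ) * F α N k x := by
    rw [Finset.sum_range_succ]
    simp only [Nat.sub_self, Nat.cast_zero, mul_zero, zero_mul, add_zero]
    unfold F
    rw [Finset.mul_sum]
    apply Finset.sum_congr rfl
    intro i hi
    simp only [Finset.mem_range] at hi
    have hc : ((N+1).choose i : ℝ) * (N + 1 - i : ℕ) = (N + 1 : ℝ) * (N.choose i : ℝ) := by
      have h2 : (N+1).choose i * (N + 1 - i) = (N+1) * N.choose i := by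
        rw [← Nat.choose_mul_succ_eq]; ring
      exact_mod_cast congrArg (Nat.cast (R := ℝ)) h2
    calc α (i + k) * ((N+1).choose i : ℝ) * (N + 1 - i : ℕ) * ((1 - x) ^ i * x ^ (N - i))
        = (((N+1).choose i : ℝ) * (N + 1 - i : ℕ)) * (α (i + k) * ((1 - x) ^ i * x ^ (N - i))) := by ring
      _ = ((N + 1 : ℝ) * (N.choose i : ℝ)) * (α (i + k) * ((1 - x) ^ i * x ^ (N - i))) := by rw [hc]
      _ = (N + 1 : ℝ) * (α (i + k) * (N.choose i : ℝ) * (1 - x) ^ i * x ^ (N - i)) := by ring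
  have hS1 : ∑ i ∈ Finset.range (N + 2), α (i + k) * ((N+1).choose i : ℝ) * (i:ℝ) * ((1 - x) ^ (i - 1) * x ^ (N + 1 - i))
      = (N + 1 : ℝ) * F α N (k + 1) x := by
    rw [Finset.sum_range_succ']
    simp only [Nat.cast_zero, mul_zero, zero_mul, add_zero, Nat.cast_ofNat]
    unfold F
    rw [Finset.mul_sum]
    apply Finset.sum_congr rfl
    intro i hi
    simp only [Finset.mem_range] at hi
    have he1 : i + 1 - 1 = i := by omega
    have he2 : N + 1 - (i + 1) = N - i := by omega
    rw [he1, he2]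
    have hc : ((N+1).choose (i+1) : ℝ) * ((i+1 : ℕ) : ℝ) = (N + 1 : ℝ) * (N.choose i : ℝ) := by
      have h2 : (N+1) * N.choose i = (N+1).choose (i+1) * (i+1) := Nat.add_one_mul_choose_eq N i
      exact_mod_cast congrArg (Nat.cast (R := ℝ)) h2.symm
    have hidx : i + 1 + k = i + (k + 1) := by omega
    rw [hidx]
    push_cast at hc ⊢
    calc α (i + (k+1)) * ((N+1).choose (i+1) : ℝ) * ((i:ℝ)+1) * ((1 - x) ^ i * x ^ (N - i))
        = (((N+1).choose (i+1) : ℝ) * ((i:ℝ)+1)) * (α (i + (k+1)) * ((1 - x) ^ i * x ^ (N - i))) := by ring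
      _ = ((N + 1 : ℝ) * (N.choose i : ℝ)) * (α (i + (k+1)) * ((1 - x) ^ i * x ^ (N - i))) := by rw [hc]
      _ = (N + 1 : ℝ) * (α (i + (k+1)) * (N.choose i : ℝ) * (1 - x) ^ i * x ^ (N - i)) := by ring
  rw [hS1, hS2]
  ring

/-- Generic: positive function with g·g'' ≤ g'² on (0,1) is log-concave there. -/
lemma isLogConcaveOn_of_deriv (g g1 g2 : ℝ → ℝ)
    (hd1 : ∀ x, HasDerivAt g (g1 x) x)
    (hd2 : ∀ x, HasDerivAt g1 (g2 x) x)
    (hpos : ∀ x ∈ Ioo (0:ℝ) 1, 0 < g x)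
    (hkey : ∀ x ∈ Ioo (0:ℝ) 1, g2 x * g x ≤ g1 x * g1 x) :
    IsLogConcaveOn (Ioo 0 1) g := by
  have hconc : ConcaveOn ℝ (Ioo (0:ℝ) 1) (fun z => Real.log (g z)) := by
    apply concaveOn_of_hasDerivWithinAt2_nonpos (convex_Ioo (0:ℝ) 1)
      (f' := fun z => g1 z / g z)
      (f'' := fun z => (g2 z * g z - g1 z * g1 z) / (g z) ^ 2)
    · exact ContinuousOn.log (fun z _ => (hd1 z).continuousAt.continuousWithinAt)
        (fun z hz => (hpos z hz).ne')
    · intro z hz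
      rw [interior_Ioo] at hz
      exact ((hd1 z).log (hpos z hz).ne').hasDerivWithinAt
    · intro z hz
      rw [interior_Ioo] at hz
      exact ((hd2 z).div (hd1 z) (hpos z hz).ne').hasDerivWithinAt
    · intro z hz
      rw [interior_Ioo] at hz
      apply div_nonpos_of_nonpos_of_nonneg
      · linarith [hkey z hz]
      · positivity
  intro x hx y hy l hl0 hl1
  have hxy : l * x + (1 - l) * y ∈ Ioo (0:ℝ) 1 := by
    obtain ⟨hx0, hx1⟩ := hx
    obtain ⟨hy0, hy1⟩ := hy
    constructor
    · nlinarith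
    · nlinarith
  have h := hconc.2 hx hy (le_of_lt hl0) (by linarith : (0:ℝ) ≤ 1 - l) (by ring)
  simp only [smul_eq_mul] at h
  rw [Real.rpow_def_of_pos (hpos x hx), Real.rpow_def_of_pos (hpos y hy), ← Real.exp_add]
  calc Real.exp (Real.log (g x) * l + Real.log (g y) * (1 - l))
      ≤ Real.exp (Real.log (g (l * x + (1 - l) * y))) := by
        apply Real.exp_le_exp.mpr
        nlinarith [h]
    _ = g (l * x + (1 - l) * y) := Real.exp_log (hpos _ hxy)

end LogConcaveMixtureAux

namespace LogConcaveMixtureAux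

/-- The pure algebra at the heart of the matter. -/
lemma habs (c0 c1 A B C v : ℝ) (hA : 0 ≤ A) (hB : 0 ≤ B) (hC : 0 ≤ C)
    (hBB : A * C ≤ B * B) (hv0 : 0 ≤ v) (hv1 : v ≤ 1) (hc0 : 0 < c0) (hc01 : c0 ≤ c1) :
    c1 * (c0 * (A - B) - c0 * (B - C)) *
      ((1 - v) * ((1 - v) * C + v * B) + v * ((1 - v) * B + v * A))
    ≤ (c1 * ((1 - v) * B + v * A - ((1 - v) * C + v * B))) *
      (c1 * ((1 - v) * B + v * A - ((1 - v) * C + v * B))) := by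
  have hu0 : (0:ℝ) ≤ 1 - v := by linarith
  have hc1 : (0:ℝ) < c1 := lt_of_lt_of_le hc0 hc01
  set q : ℝ := (1 - v) * ((1 - v) * C + v * B) + v * ((1 - v) * B + v * A) with hq
  set p : ℝ := (1 - v) * B + v * A - ((1 - v) * C + v * B) with hp
  set D : ℝ := A - 2 * B + C with hD
  have h1 : 0 ≤ (1 - v) * C + v * B := add_nonneg (mul_nonneg hu0 hC) (mul_nonneg hv0 hB)
  have h2 : 0 ≤ (1 - v) * B + v * A := add_nonneg (mul_nonneg hu0 hB) (mul_nonneg hv0 hA)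
  have hq0 : 0 ≤ q := add_nonneg (mul_nonneg hu0 h1) (mul_nonneg hv0 h2)
  have hid : p * p = D * q + (B * B - A * C) := by rw [hp, hq, hD]; ring
  rcases le_or_gt D 0 with hD0 | hD0
  · calc c1 * (c0 * (A - B) - c0 * (B - C)) * q = (c1 * c0) * (D * q) := by rw [hD]; ring
      _ ≤ 0 := mul_nonpos_of_nonneg_of_nonpos (by positivity)
            (mul_nonpos_of_nonpos_of_nonneg hD0 hq0)
      _ ≤ (c1 * p) * (c1 * p) := mul_self_nonneg _
  · calc c1 * (c0 * (A - B) - c0 * (B - C)) * q = (c1 * c0) * (D * q) := by rw [hD]; ring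
      _ ≤ (c1 * c1) * (D * q) := mul_le_mul_of_nonneg_right (by nlinarith)
            (mul_nonneg hD0.le hq0)
      _ ≤ (c1 * c1) * (p * p) := mul_le_mul_of_nonneg_left (by nlinarith) (by positivity)
      _ = (c1 * p) * (c1 * p) := by ring

end LogConcaveMixtureAux

open LogConcaveMixtureAux in
theorem log_concave_mixture_beta_discrete
    (M : ℕ) (hM : 0 < M) (α : ℕ → ℝ)
    (hα_nonneg : ∀ i ≤ M, 0 ≤ α i)
    (hα_logconcave : ∀ i j : ℕ, 1 ≤ i → i ≤ j → j + 1 ≤ M →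
      α (i - 1) * α (j + 1) ≤ α i * α j) :
    IsLogConcaveOn (Set.Ioo (0 : ℝ) 1)
      (fun x : ℝ => ∑ i ∈ Finset.range (M + 1),
        α i * (M.choose i : ℝ) * (1 - x) ^ i * x ^ (M - i)) := by
  by_cases hzero : ∀ i ≤ M, α i = 0
  · intro x hx y hy l hl0 hl1
    have hz : ∀ z : ℝ, ∑ i ∈ Finset.range (M + 1),
        α i * (M.choose i : ℝ) * (1 - z) ^ i * z ^ (M - i) = 0 := by
      intro z
      apply Finset.sum_eq_zero
      intro i hi
      simp only [Finset.mem_range] at hi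
      rw [hzero i (by omega)]
      ring
    simp only [hz]
    rw [Real.zero_rpow hl0.ne', zero_mul]
  · push_neg at hzero
    obtain ⟨i0, hi0M, hi0⟩ := hzero
    have hi0pos : 0 < α i0 := lt_of_le_of_ne (hα_nonneg i0 hi0M) (Ne.symm hi0)
    have hfun : (fun x : ℝ => ∑ i ∈ Finset.range (M + 1),
        α i * (M.choose i : ℝ) * (1 - x) ^ i * x ^ (M - i)) = F α M 0 := rfl
    rw [hfun]
    have hpos : ∀ z ∈ Ioo (0:ℝ) 1, 0 < F α M 0 z := by
      intro z hz
      obtain ⟨hz0, hz1⟩ := hz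
      apply Finset.sum_pos'
      · intro i hi
        simp only [Finset.mem_range] at hi
        have h0 : 0 ≤ α (i + 0) := hα_nonneg _ (by omega)
        have h1 : (0:ℝ) ≤ 1 - z := by linarith
        positivity
      · refine ⟨i0, Finset.mem_range.mpr (by omega), ?_⟩
        have h1 : (0:ℝ) < 1 - z := by linarith
        have hcp : 0 < (M.choose i0 : ℝ) := by
          exact_mod_cast Nat.choose_pos hi0M
        have h2 : 0 < α (i0 + 0) := by simpa using hi0pos
        positivity
    match M, hM, hα_nonneg, hα_logconcave, hpos with
    | 1, _, hα_nonneg, hα_logconcave, hpos =>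
      apply isLogConcaveOn_of_deriv _
        (fun z => ((0:ℕ) + 1 : ℝ) * (F α 0 0 z - F α 0 1 z)) (fun _ => 0)
      · intro x
        exact hasDerivAt_F α 0 0 x
      · intro x
        have hconst : (fun z : ℝ => ((0:ℕ) + 1 : ℝ) * (F α 0 0 z - F α 0 1 z))
            = fun _ : ℝ => ((0:ℕ) + 1 : ℝ) * (α 0 - α 1) := by
          funext z
          rw [F_zero, F_zero]
        rw [hconst]
        exact hasDerivAt_const x _
      · exact hpos
      · intro x _
        rw [zero_mul]
        exact mul_self_nonneg _
    | (m + 2), _, hα_nonneg, hα_logconcave, hpos =>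
      apply isLogConcaveOn_of_deriv _
        (fun z => (((m + 1 : ℕ) : ℝ) + 1) * (F α (m+1) 0 z - F α (m+1) 1 z))
        (fun z => (((m + 1 : ℕ) : ℝ) + 1) * ((((m : ℕ) : ℝ) + 1) * (F α m 0 z - F α m 1 z)
          - (((m : ℕ) : ℝ) + 1) * (F α m 1 z - F α m 2 z)))
      · intro x
        exact hasDerivAt_F α (m+1) 0 x
      · intro x
        exact ((hasDerivAt_F α m 0 x).sub (hasDerivAt_F α m 1 x)).const_mul _
      · exact hpos
      · intro z hz
        obtain ⟨hz0, hz1⟩ := hz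
        have e0 : F α (m+2) 0 z = (1-z) * F α (m+1) 1 z + z * F α (m+1) 0 z := F_succ α (m+1) 0 z
        have e1 : F α (m+1) 1 z = (1-z) * F α m 2 z + z * F α m 1 z := F_succ α m 1 z
        have e2 : F α (m+1) 0 z = (1-z) * F α m 1 z + z * F α m 0 z := F_succ α m 0 z
        have hBB : F α m 0 z * F α m 2 z ≤ F α m 1 z * F α m 1 z :=
          F_shift_logconcave α (m+2) hα_logconcave m 1 1 le_rfl (by omega) (by omega) z
            hz0.le hz1.le
        have hAn : 0 ≤ F α m 0 z := F_nonneg α (m+2) hα_nonneg m 0 (by omega) hz0.le hz1.le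
        have hBn : 0 ≤ F α m 1 z := F_nonneg α (m+2) hα_nonneg m 1 (by omega) hz0.le hz1.le
        have hCn : 0 ≤ F α m 2 z := F_nonneg α (m+2) hα_nonneg m 2 (by omega) hz0.le hz1.le
        have hc01 : (((m : ℕ) : ℝ) + 1) ≤ (((m + 1 : ℕ) : ℝ) + 1) := by push_cast; linarith
        have hc0p : (0:ℝ) < ((m : ℕ) : ℝ) + 1 := by positivity
        rw [e0, e1, e2]
        exact habs _ _ _ _ _ _ hAn hBn hCn hBB hz0.le hz1.le hc0p hc01
end

section
/- Let M be a positive integer and let α₀, α₁, …, α_M be a log-concave sequence of nonnegative reals summing to 1. Then the mixture density h(x) = Σ_{i=0}^{M} αᵢ · (1/β(M-i+1, i+1)) · x^{M-i} · (1-x)^i of the Beta(M-i+1, i+1) densities with mixing weights αᵢ is log-concave on (0, 1). -/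
open Real Set

/-- The Beta function `β(a,b) = Γ(a)Γ(b)/Γ(a+b)`. -/
noncomputable def betaFun (a b : ℝ) : ℝ :=
  Real.Gamma a * Real.Gamma b / Real.Gamma (a + b)

noncomputable def bern (β : ℕ → ℝ) (m k : ℕ) (x : ℝ) : ℝ :=
  ∑ t ∈ Finset.range (m + 1), β (k + t) * (m.choose t : ℝ) * x ^ (m - t) * (1 - x) ^ t

lemma bern_zero (β : ℕ → ℝ) (k : ℕ) (x : ℝ) : bern β 0 k x = β k := by
  simp [bern]

lemma bern_succ (β : ℕ → ℝ) (m k : ℕ) (x : ℝ) :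
    bern β (m + 1) k x = x * bern β m k x + (1 - x) * bern β m (k + 1) x := by
  have key : ∀ t ∈ Finset.range (m + 2),
      β (k + t) * ((m+1).choose t : ℝ) * x ^ (m + 1 - t) * (1 - x) ^ t
      = β (k + t) * (m.choose t : ℝ) * x ^ (m + 1 - t) * (1 - x) ^ t
        + (if t = 0 then 0 else β (k + t) * (m.choose (t-1) : ℝ) * x ^ (m + 1 - t) * (1 - x) ^ t) := by
    intro t _
    rcases Nat.eq_zero_or_pos t with rfl | htpos
    · simp
    · obtain ⟨s, rfl⟩ : ∃ s, t = s + 1 := ⟨t - 1, by omega⟩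
      rw [if_neg (by omega)]
      rw [Nat.choose_succ_succ m s]
      push_cast
      ring
  rw [show bern β (m+1) k x = ∑ t ∈ Finset.range (m + 2),
      β (k + t) * ((m+1).choose t : ℝ) * x ^ (m + 1 - t) * (1 - x) ^ t from rfl]
  rw [Finset.sum_congr rfl key, Finset.sum_add_distrib]
  congr 1
  · -- S1 = x * bern m k
    rw [Finset.sum_range_succ, Nat.choose_succ_self]
    simp only [Nat.cast_zero, mul_zero, zero_mul, add_zero]
    rw [bern, Finset.mul_sum]
    apply Finset.sum_congr rfl
    intro t ht
    rw [Finset.mem_range] at ht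
    have : m + 1 - t = (m - t) + 1 := by omega
    rw [this, pow_succ]
    ring
  · -- S2 = (1-x) * bern m (k+1)
    rw [Finset.sum_range_succ']
    simp only [if_pos, add_zero, if_neg (Nat.succ_ne_zero _), ite_true, if_true]
    rw [bern, Finset.mul_sum]
    apply Finset.sum_congr rfl
    intro t ht
    simp only [Nat.add_sub_cancel]
    have h1 : m + 1 - (t + 1) = m - t := by omega
    have h2 : k + (t + 1) = k + 1 + t := by omega
    rw [h1, h2, pow_succ]
    ring

lemma bern_nonneg {β : ℕ → ℝ} {M : ℕ} (hβ : ∀ i ≤ M, 0 ≤ β i) {m k : ℕ}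
    (hkm : k + m ≤ M) {x : ℝ} (hx0 : 0 ≤ x) (hx1 : x ≤ 1) :
    0 ≤ bern β m k x := by
  apply Finset.sum_nonneg
  intro t ht
  rw [Finset.mem_range] at ht
  have h1 := hβ (k + t) (by omega)
  have h2 : (0:ℝ) ≤ 1 - x := by linarith
  have h3 : (0:ℝ) ≤ (m.choose t : ℝ) := by positivity
  exact mul_nonneg (mul_nonneg (mul_nonneg h1 h3) (pow_nonneg hx0 _)) (pow_nonneg h2 _)

/-- The key combinatorial lemma: for fixed `x ∈ [0,1]` and `m`, the sequence
`k ↦ bern β m k x` is log-concave (strong form), by induction on `m`. -/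
lemma bern_logconcave {β : ℕ → ℝ} {M : ℕ} (hβ : ∀ i ≤ M, 0 ≤ β i)
    (hlc : ∀ i j : ℕ, 1 ≤ i → i ≤ j → j + 1 ≤ M → β (i - 1) * β (j + 1) ≤ β i * β j)
    {x : ℝ} (hx0 : 0 ≤ x) (hx1 : x ≤ 1) :
    ∀ m i j : ℕ, 1 ≤ i → i ≤ j → j + 1 + m ≤ M →
      bern β m (i - 1) x * bern β m (j + 1) x ≤ bern β m i x * bern β m j x := by
  intro m
  induction m with
  | zero =>
    intro i j hi hij hjm
    simpa [bern_zero] using hlc i j hi hij (by omega)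
  | succ m ih =>
    intro i j hi hij hjm
    have him : (i - 1) + 1 = i := by omega
    rw [bern_succ, bern_succ, bern_succ, bern_succ, him]
    set A : ℕ → ℝ := fun k => bern β m k x with hA
    -- nonnegativity of the relevant A's
    have hAnn : ∀ k, k + m ≤ M → 0 ≤ A k := fun k hk => bern_nonneg hβ hk hx0 hx1
    have h1 : A (i - 1) * A (j + 1) ≤ A i * A j := ih i j hi hij (by omega)
    have h2 : A i * A (j + 1 + 1) ≤ A (i + 1) * A (j + 1) := by
      have := ih (i + 1) (j + 1) (by omega) (by omega) (by omega)
      simpa [Nat.add_sub_cancel] using this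
    have h3 : A (i - 1) * A (j + 1 + 1) ≤ A (i + 1) * A j := by
      have step1 : A (i - 1) * A (j + 1 + 1) ≤ A i * A (j + 1) := by
        have := ih i (j + 1) hi (by omega) (by omega)
        simpa using this
      rcases Nat.lt_or_ge i j with hlt | hge
      · have step2 : A i * A (j + 1) ≤ A (i + 1) * A j := by
          have := ih (i + 1) j (by omega) (by omega) (by omega)
          simpa [Nat.add_sub_cancel] using this
        linarith
      · have : i = j := by omega
        subst this
        calc A (i-1) * A (i+1+1) ≤ A i * A (i+1) := step1
          _ = A (i+1) * A i := by ring
    have hx1' : 0 ≤ 1 - x := by linarith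
    have nAi : 0 ≤ A i := hAnn i (by omega)
    have nAj : 0 ≤ A j := hAnn j (by omega)
    have nAi1 : 0 ≤ A (i + 1) := hAnn (i+1) (by omega)
    have nAj1 : 0 ≤ A (j + 1) := hAnn (j+1) (by omega)
    have nAim : 0 ≤ A (i - 1) := hAnn (i-1) (by omega)
    have nAj2 : 0 ≤ A (j + 1 + 1) := hAnn (j+1+1) (by omega)
    nlinarith [mul_nonneg hx0 hx0, mul_nonneg hx1' hx1', mul_nonneg hx0 hx1',
      mul_le_mul_of_nonneg_left h1 (mul_nonneg hx0 hx0),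
      mul_le_mul_of_nonneg_left h2 (mul_nonneg hx1' hx1'),
      mul_le_mul_of_nonneg_left h3 (mul_nonneg hx0 hx1')]

lemma bern_hasDerivAt (β : ℕ → ℝ) (m k : ℕ) (x : ℝ) :
    HasDerivAt (fun y => bern β m k y)
      ((m : ℝ) * (bern β (m - 1) k x - bern β (m - 1) (k + 1) x)) x := by
  induction m generalizing k with
  | zero =>
    simp only [Nat.cast_zero, zero_mul]
    have : (fun y => bern β 0 k y) = fun _ => β k := by
      funext y; exact bern_zero β k y
    rw [this]
    exact hasDerivAt_const x (β k)
  | succ m ih =>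
    have hfun : (fun y => bern β (m + 1) k y)
        = fun y => y * bern β m k y + (1 - y) * bern β m (k + 1) y := by
      funext y; exact bern_succ β m k y
    rw [hfun]
    have h1 : HasDerivAt (fun y : ℝ => y * bern β m k y)
        (1 * bern β m k x + x * ((m : ℝ) * (bern β (m-1) k x - bern β (m-1) (k+1) x))) x :=
      (hasDerivAt_id x).mul (ih k)
    have h2 : HasDerivAt (fun y : ℝ => (1 - y) * bern β m (k + 1) y)
        ((0 - 1) * bern β m (k+1) x
          + (1 - x) * ((m : ℝ) * (bern β (m-1) (k+1) x - bern β (m-1) (k+1+1) x))) x :=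
      (((hasDerivAt_const x (1:ℝ)).sub (hasDerivAt_id x))).mul (ih (k+1))
    have h := h1.add h2
    refine h.congr_deriv (Eq.symm ?_)
    simp only [Nat.add_sub_cancel]
    rcases Nat.eq_zero_or_pos m with rfl | hm
    · simp [bern_zero]
      ring
    · have e1 : bern β m k x = x * bern β (m-1) k x + (1 - x) * bern β (m-1) (k+1) x := by
        obtain ⟨m', rfl⟩ : ∃ m', m = m' + 1 := ⟨m - 1, by omega⟩
        simpa using bern_succ β m' k x
      have e2 : bern β m (k+1) x
          = x * bern β (m-1) (k+1) x + (1 - x) * bern β (m-1) (k+1+1) x := by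
        obtain ⟨m', rfl⟩ : ∃ m', m = m' + 1 := ⟨m - 1, by omega⟩
        simpa using bern_succ β m' (k+1) x
      rw [e1, e2]
      push_cast
      ring

lemma isLogConcaveOn_of_deriv2 (B B' B'' : ℝ → ℝ)
    (hd1 : ∀ x, HasDerivAt B (B' x) x)
    (hd2 : ∀ x, HasDerivAt B' (B'' x) x)
    (hpos : ∀ x ∈ Ioo (0:ℝ) 1, 0 < B x)
    (hkey : ∀ x ∈ Ioo (0:ℝ) 1, B'' x * B x ≤ (B' x)^2) :
    IsLogConcaveOn (Set.Ioo 0 1) B := by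
  have hint : interior (Set.Ioo (0:ℝ) 1) = Set.Ioo 0 1 := interior_Ioo
  have hconc : ConcaveOn ℝ (Ioo (0:ℝ) 1) (fun x => Real.log (B x)) := by
    apply concaveOn_of_hasDerivWithinAt2_nonpos (f' := fun x => B' x / B x)
      (f'' := fun x => (B'' x * B x - B' x * B' x) / (B x)^2) (convex_Ioo (0:ℝ) 1)
    · intro x hx
      exact (((hd1 x).continuousAt).log (hpos x hx).ne').continuousWithinAt
    · intro x hx
      rw [hint] at hx
      exact (((hd1 x).log (hpos x hx).ne')).hasDerivWithinAt
    · intro x hx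
      rw [hint] at hx
      have : HasDerivAt (fun y => B' y / B y)
          ((B'' x * B x - B' x * B' x) / (B x)^2) x :=
        (hd2 x).div (hd1 x) (hpos x hx).ne'
      exact this.hasDerivWithinAt
    · intro x hx
      rw [hint] at hx
      apply div_nonpos_of_nonpos_of_nonneg
      · have := hkey x hx
        nlinarith [this]
      · positivity
  intro x hx y hy l hl0 hl1
  have hz : l * x + (1 - l) * y ∈ Ioo (0:ℝ) 1 :=
    (convex_Ioo (0:ℝ) 1) hx hy (le_of_lt hl0) (by linarith) (by ring)
  have hcc := hconc.2 hx hy (le_of_lt hl0) (by linarith : (0:ℝ) ≤ 1 - l) (by ring)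
  simp only [smul_eq_mul] at hcc
  have hBx := hpos x hx
  have hBy := hpos y hy
  have hBz := hpos _ hz
  calc B x ^ l * B y ^ (1 - l)
      = Real.exp (Real.log (B x) * l) * Real.exp (Real.log (B y) * (1 - l)) := by
        rw [Real.rpow_def_of_pos hBx, Real.rpow_def_of_pos hBy]
    _ = Real.exp (l * Real.log (B x) + (1 - l) * Real.log (B y)) := by
        rw [← Real.exp_add]; ring_nf
    _ ≤ Real.exp (Real.log (B (l * x + (1 - l) * y))) := by
        apply Real.exp_le_exp.mpr
        exact hcc
    _ = B (l * x + (1 - l) * y) := Real.exp_log hBz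

lemma bern_pos {β : ℕ → ℝ} {M : ℕ} (hβ : ∀ i ≤ M, 0 ≤ β i)
    (hex : ∃ j, j ≤ M ∧ 0 < β j) {x : ℝ} (hx : x ∈ Set.Ioo (0:ℝ) 1) :
    0 < bern β M 0 x := by
  obtain ⟨hx0, hx1⟩ := hx
  obtain ⟨j, hjM, hj⟩ := hex
  apply Finset.sum_pos'
  · intro t ht
    rw [Finset.mem_range] at ht
    have h1 := hβ (0 + t) (by omega)
    have h2 : (0:ℝ) ≤ 1 - x := by linarith
    have h3 : (0:ℝ) ≤ (M.choose t : ℝ) := by positivity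
    exact mul_nonneg (mul_nonneg (mul_nonneg h1 h3) (pow_nonneg (le_of_lt hx0) _))
      (pow_nonneg h2 _)
  · refine ⟨j, Finset.mem_range.mpr (by omega), ?_⟩
    have h2 : (0:ℝ) < 1 - x := by linarith
    have h3 : (0:ℝ) < (M.choose j : ℝ) := by
      exact_mod_cast Nat.cast_pos.mpr (Nat.choose_pos hjM)
    have h4 : 0 < β (0 + j) := by simpa using hj
    exact mul_pos (mul_pos (mul_pos h4 h3) (pow_pos hx0 _)) (pow_pos h2 _)

theorem bern_isLogConcave {β : ℕ → ℝ} {M : ℕ} (hM : 1 ≤ M)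
    (hβ : ∀ i ≤ M, 0 ≤ β i)
    (hlc : ∀ i j : ℕ, 1 ≤ i → i ≤ j → j + 1 ≤ M → β (i - 1) * β (j + 1) ≤ β i * β j)
    (hex : ∃ j, j ≤ M ∧ 0 < β j) (c : ℝ) (hc : 0 < c) :
    IsLogConcaveOn (Set.Ioo 0 1) (fun x => c * bern β M 0 x) := by
  apply isLogConcaveOn_of_deriv2
    (B' := fun x => c * ((M:ℝ) * (bern β (M-1) 0 x - bern β (M-1) 1 x)))
    (B'' := fun x => c * ((M:ℝ) *
      (((M-1:ℕ):ℝ) * (bern β (M-1-1) 0 x - bern β (M-1-1) 1 x)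
        - ((M-1:ℕ):ℝ) * (bern β (M-1-1) 1 x - bern β (M-1-1) 2 x))))
  · intro x
    exact (bern_hasDerivAt β M 0 x).const_mul c
  · intro x
    have h0 := bern_hasDerivAt β (M-1) 0 x
    have h1 := bern_hasDerivAt β (M-1) 1 x
    have := ((h0.sub h1).const_mul (M:ℝ)).const_mul c
    exact this
  · intro x hx
    exact mul_pos hc (bern_pos hβ hex hx)
  · intro x hx
    obtain ⟨hx0', hx1'⟩ := hx
    have hx0 : (0:ℝ) ≤ x := le_of_lt hx0'
    have hx1 : x ≤ 1 := le_of_lt hx1'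
    -- first prove the c = 1 inequality
    have key : ((M:ℝ) * (((M-1:ℕ):ℝ) * (bern β (M-1-1) 0 x - bern β (M-1-1) 1 x)
          - ((M-1:ℕ):ℝ) * (bern β (M-1-1) 1 x - bern β (M-1-1) 2 x)))
        * bern β M 0 x
        ≤ ((M:ℝ) * (bern β (M-1) 0 x - bern β (M-1) 1 x))^2 := by
      rcases Nat.lt_or_ge M 2 with hM1 | hM2
      · have : M = 1 := by omega
        subst this
        norm_num
        positivity
      · obtain ⟨m, rfl⟩ : ∃ m, M = m + 2 := ⟨M - 2, by omega⟩
        simp only [show m + 2 - 1 = m + 1 from rfl, show m + 1 - 1 = m from rfl]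
        set f0 := bern β m 0 x
        set f1 := bern β m 1 x
        set f2 := bern β m 2 x
        set F := bern β (m+1) 0 x with hFdef
        set G := bern β (m+1) 1 x with hGdef
        have hF : F = x * f0 + (1-x) * f1 := bern_succ β m 0 x
        have hG : G = x * f1 + (1-x) * f2 := bern_succ β m 1 x
        have hB : bern β (m+2) 0 x = x * F + (1-x) * G := bern_succ β (m+1) 0 x
        have hlc2 : f0 * f2 ≤ f1 * f1 := by
          have := bern_logconcave hβ hlc hx0 hx1 m 1 1 le_rfl le_rfl (by omega)
          simpa using this
        have iden2 : ((m:ℝ)+2)*((m:ℝ)+1)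
              * ((F - G)^2 - (x*F + (1-x)*G)*(f0 - 2*f1 + f2))
            = ((m:ℝ)+2)*((m:ℝ)+1)*(f1^2 - f0*f2) := by
          rw [hF, hG]; ring
        have h2 : (0:ℝ) ≤ ((m:ℝ)+2)*((m:ℝ)+1)*(f1^2 - f0*f2) := by
          have : (0:ℝ) ≤ f1^2 - f0*f2 := by nlinarith [hlc2]
          positivity
        have h3 : (0:ℝ) ≤ ((m:ℝ)+2)*(F-G)^2 := by positivity
        rw [hB]
        push_cast
        nlinarith [iden2, h2, h3]
    have hc2 : (0:ℝ) < c^2 := by positivity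
    nlinarith [key, mul_le_mul_of_nonneg_left key (le_of_lt hc2)]

lemma one_div_betaFun {M i : ℕ} (hi : i ≤ M) :
    1 / betaFun ((M : ℝ) - i + 1) (i + 1) = ((M:ℝ) + 1) * (M.choose i : ℝ) := by
  have h1 : ((M : ℝ) - i + 1) = ((M - i : ℕ) : ℝ) + 1 := by
    rw [Nat.cast_sub hi]
  have h2 : (((M - i : ℕ) : ℝ) + 1) + ((i : ℝ) + 1) = ((M + 1 : ℕ) : ℝ) + 1 := by
    push_cast [Nat.cast_sub hi]; ring
  rw [betaFun, h1, h2, Real.Gamma_nat_eq_factorial, Real.Gamma_nat_eq_factorial,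
    Real.Gamma_nat_eq_factorial]
  have hfact : ((M.choose i : ℝ)) * (i.factorial : ℝ) * ((M - i).factorial : ℝ)
      = (M.factorial : ℝ) := by
    exact_mod_cast congrArg (Nat.cast (R := ℝ)) (Nat.choose_mul_factorial_mul_factorial hi)
  have hM1 : (((M + 1).factorial : ℕ) : ℝ) = ((M:ℝ) + 1) * (M.factorial : ℝ) := by
    rw [Nat.factorial_succ]; push_cast; ring
  have hfi : (0:ℝ) < (i.factorial : ℝ) := by exact_mod_cast i.factorial_pos
  have hfmi : (0:ℝ) < ((M - i).factorial : ℝ) := by exact_mod_cast (M - i).factorial_pos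
  have hfM1 : (0:ℝ) < (((M+1).factorial : ℕ) : ℝ) := by exact_mod_cast (M+1).factorial_pos
  rw [one_div, inv_div, div_eq_iff (by positivity)]
  rw [hM1]
  linear_combination (-((M:ℝ) + 1)) * hfact

theorem log_concave_beta_mixture_density_discrete
    (M : ℕ) (hM : 0 < M) (α : ℕ → ℝ)
    (hα_nonneg : ∀ i ≤ M, 0 ≤ α i)
    (hα_logconcave : ∀ i j : ℕ, 1 ≤ i → i ≤ j → j + 1 ≤ M →
      α (i - 1) * α (j + 1) ≤ α i * α j)
    (hα_prob : ∑ i ∈ Finset.range (M + 1), α i = 1) :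
    IsLogConcaveOn (Set.Ioo (0 : ℝ) 1)
      (fun x : ℝ => ∑ i ∈ Finset.range (M + 1),
        α i * (1 / betaFun ((M : ℝ) - i + 1) (i + 1)) * x ^ (M - i) * (1 - x) ^ i) := by
  have hfun : (fun x : ℝ => ∑ i ∈ Finset.range (M + 1),
        α i * (1 / betaFun ((M : ℝ) - i + 1) (i + 1)) * x ^ (M - i) * (1 - x) ^ i)
      = fun x : ℝ => ((M:ℝ) + 1) * bern α M 0 x := by
    funext x
    rw [bern, Finset.mul_sum]
    apply Finset.sum_congr rfl
    intro i hi
    rw [Finset.mem_range] at hi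
    rw [one_div_betaFun (by omega : i ≤ M)]
    simp only [Nat.zero_add]
    ring
  rw [hfun]
  apply bern_isLogConcave hM hα_nonneg hα_logconcave
  · by_contra hcon
    push_neg at hcon
    have : ∑ i ∈ Finset.range (M + 1), α i ≤ ∑ i ∈ Finset.range (M + 1), (0:ℝ) := by
      apply Finset.sum_le_sum
      intro i hi
      rw [Finset.mem_range] at hi
      exact hcon i (by omega)
    simp [hα_prob] at this
    linarith
  · positivity
end

section
/- Let M > 1, q > 0 and n > -2 be real numbers, and let A = {s ∈ ℝ : |s - (n - s)| ≤ q, 0 ≤ s ≤ M, and 0 ≤ n - s ≤ M}. Then ∫_A C(M-1, s)·C(M-1, n-s) ds ≥ ∫_A C(M, s)·C(M-2, n-s) ds. -/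
set_option maxHeartbeats 1600000


open Real MeasureTheory Set

/-- Generalized binomial coefficient `C(M,s) = Γ(M+1)/(Γ(s+1)·Γ(M-s+1))`. -/
noncomputable def genBinom (M s : ℝ) : ℝ :=
  Real.Gamma (M + 1) / (Real.Gamma (s + 1) * Real.Gamma (M - s + 1))

lemma contGammaInv : Continuous fun x : ℝ => (Real.Gamma x)⁻¹ := by
  have h : (fun x : ℝ => (Real.Gamma x)⁻¹) = fun x : ℝ => ((Complex.Gamma (x : ℂ))⁻¹).re := by
    funext x
    rw [Complex.Gamma_ofReal, ← Complex.ofReal_inv, Complex.ofReal_re]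
  rw [h]
  exact Complex.continuous_re.comp
    ((Complex.differentiable_one_div_Gamma.continuous).comp Complex.continuous_ofReal)

noncomputable def auxU (M n s : ℝ) : ℝ :=
  2 * (s + M - n - 1) *
    ((Real.Gamma s)⁻¹ * (Real.Gamma (n - s + 1))⁻¹ * (Real.Gamma (M - s + 1))⁻¹ *
      (Real.Gamma (M - n + s))⁻¹)

lemma auxU_continuous (M n : ℝ) : Continuous (auxU M n) := by
  unfold auxU
  apply Continuous.mul (by continuity)
  exact (((contGammaInv.mul (contGammaInv.comp (by continuity))).mul
    (contGammaInv.comp (by continuity))).mul (contGammaInv.comp (by continuity)))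

lemma genBinom_cont (a : ℝ) : Continuous fun s => genBinom a s := by
  unfold genBinom
  simp only [div_eq_mul_inv, mul_inv]
  exact continuous_const.mul ((contGammaInv.comp (by continuity)).mul
    (contGammaInv.comp (by continuity)))

lemma key_identity (M n s : ℝ) (hM : 1 < M) (hs0 : 0 < s) (hsn : s < n) (hsM : s < M)
    (hsnM : 0 < M - n + s) (hne : M - n + s - 1 ≠ 0) :
    genBinom (M - 1) s * genBinom (M - 1) (n - s) - genBinom M s * genBinom (M - 2) (n - s)
      = (Real.Gamma M) ^ 2 / (2 * (M - 1)) * (auxU M n (s + 1) - auxU M n s) := by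
  have hA1 : 0 < Real.Gamma s := Real.Gamma_pos_of_pos hs0
  have hA2 : 0 < Real.Gamma (n - s) := Real.Gamma_pos_of_pos (by linarith)
  have hA3 : 0 < Real.Gamma (M - s) := Real.Gamma_pos_of_pos (by linarith)
  have hB : 0 < Real.Gamma (M - 1) := Real.Gamma_pos_of_pos (by linarith)
  have hA4 : Real.Gamma (M - n + s - 1) ≠ 0 := by
    apply Real.Gamma_ne_zero
    intro m
    rcases Nat.eq_zero_or_pos m with h0 | h1
    · subst h0; simpa using hne
    · have : (1 : ℝ) ≤ m := by exact_mod_cast h1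
      intro hcontra; linarith
  have e1 : Real.Gamma (s + 1) = s * Real.Gamma s := Real.Gamma_add_one (ne_of_gt hs0)
  have e2 : Real.Gamma (n - s + 1) = (n - s) * Real.Gamma (n - s) :=
    Real.Gamma_add_one (by intro h; exact absurd h (by linarith))
  have e3 : Real.Gamma (M - s + 1) = (M - s) * Real.Gamma (M - s) :=
    Real.Gamma_add_one (by intro h; exact absurd h (by linarith))
  have e4 : Real.Gamma (M - n + s) = (M - n + s - 1) * Real.Gamma (M - n + s - 1) := by
    conv_lhs => rw [show M - n + s = M - n + s - 1 + 1 by ring]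
    exact Real.Gamma_add_one hne
  have e5 : Real.Gamma (M - n + s + 1) = (M - n + s) * Real.Gamma (M - n + s) :=
    Real.Gamma_add_one (ne_of_gt hsnM)
  have e6 : Real.Gamma (M + 1) = M * Real.Gamma M := Real.Gamma_add_one (by intro h; exact absurd h (by linarith))
  have e7 : Real.Gamma M = (M - 1) * Real.Gamma (M - 1) := by
    conv_lhs => rw [show M = M - 1 + 1 by ring]
    exact Real.Gamma_add_one (by intro h; exact absurd h (by linarith))
  unfold genBinom auxU
  rw [show M - 1 + 1 = M by ring, show M - 1 - s + 1 = M - s by ring,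
    show M - 1 - (n - s) + 1 = M - n + s by ring, show M - 2 + 1 = M - 1 by ring,
    show M - 2 - (n - s) + 1 = M - n + s - 1 by ring,
    show n - (s + 1) + 1 = n - s by ring, show M - (s + 1) + 1 = M - s by ring,
    show M - n + (s + 1) = M - n + s + 1 by ring]
  rw [e5, e4, e6, e7, e1, e2, e3]
  have hs' : s ≠ 0 := ne_of_gt hs0
  have hns' : n - s ≠ 0 := by intro h; exact absurd h (by linarith)
  have hMs' : M - s ≠ 0 := by intro h; exact absurd h (by linarith)
  have hMns' : M - n + s ≠ 0 := ne_of_gt hsnM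
  have hM1' : M - 1 ≠ 0 := by intro h; exact absurd h (by linarith)
  have hA1' := ne_of_gt hA1
  have hA2' := ne_of_gt hA2
  have hA3' := ne_of_gt hA3
  have hB' := ne_of_gt hB
  field_simp
  ring

lemma auxU_reflect (M n x : ℝ) :
    auxU M n x - auxU M n (n + 1 - x)
      = 2 * (2 * x - n - 1) *
        ((Real.Gamma x)⁻¹ * (Real.Gamma (n - x + 1))⁻¹ * (Real.Gamma (M - x + 1))⁻¹ *
          (Real.Gamma (M - n + x))⁻¹) := by
  unfold auxU
  rw [show n - (n + 1 - x) + 1 = x by ring, show M - (n + 1 - x) + 1 = M - n + x by ring,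
    show M - n + (n + 1 - x) = M - x + 1 by ring, show n + 1 - x = n - x + 1 by ring]
  ring

theorem genBinom_integral_ineq_A
    (M q n : ℝ) (hM : 1 < M) (hq : 0 < q) (hn : -2 < n)
    (A : Set ℝ)
    (hA : A = {s : ℝ | |s - (n - s)| ≤ q ∧ 0 ≤ s ∧ s ≤ M ∧ 0 ≤ n - s ∧ n - s ≤ M}) :
    (∫ s in A, genBinom M s * genBinom (M - 2) (n - s)) ≤
      ∫ s in A, genBinom (M - 1) s * genBinom (M - 1) (n - s) := by
  by_cases hcase : 0 < n ∧ n < 2 * M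
  · obtain ⟨hn0, hn2M⟩ := hcase
    set d : ℝ := min M (min n ((n + q) / 2)) with hddef
    set c : ℝ := n - d with hcdef
    have hdM : d ≤ M := min_le_left _ _
    have hdn : d ≤ n := le_trans (min_le_right _ _) (min_le_left _ _)
    have hdq : d ≤ (n + q) / 2 := le_trans (min_le_right _ _) (min_le_right _ _)
    have hnd : n / 2 ≤ d := le_min (by linarith) (le_min (by linarith) (by linarith))
    have hcd : c ≤ d := by rw [hcdef]; linarith
    have hc0 : 0 ≤ c := by rw [hcdef]; linarith
    have hcnM : n - M ≤ c := by rw [hcdef]; linarith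
    have hAeq : A = Icc c d := by
      rw [hA]
      ext s
      simp only [mem_setOf_eq, mem_Icc]
      constructor
      · rintro ⟨habs, h0s, hsM, h0ns, hnsM⟩
        rw [abs_le] at habs
        obtain ⟨ha1, ha2⟩ := habs
        constructor
        · have : n - s ≤ d := le_min (by linarith) (le_min (by linarith) (by linarith))
          rw [hcdef]; linarith
        · exact le_min (by linarith) (le_min (by linarith) (by linarith))
      · rintro ⟨h1, h2⟩
        have hsM : s ≤ M := h2.trans hdM
        have hsn : s ≤ n := h2.trans hdn
        have hsq : s ≤ (n + q) / 2 := h2.trans hdq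
        have h1' : n - d ≤ s := by rw [hcdef] at h1; exact h1
        exact ⟨abs_le.mpr ⟨by linarith, by linarith⟩, by linarith, hsM, by linarith, by linarith⟩
    have hUc := auxU_continuous M n
    have hUc' : Continuous fun x : ℝ => auxU M n (x + 1) :=
      hUc.comp (continuous_id.add continuous_const)
    have hUcr : Continuous fun x : ℝ => auxU M n (n + 1 - x) :=
      hUc.comp (continuous_const.sub continuous_id)
    have hsubc : Continuous fun s : ℝ => n - s := continuous_const.sub continuous_id
    have hFc : Continuous fun s => genBinom (M - 1) s * genBinom (M - 1) (n - s) :=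
      (genBinom_cont (M - 1)).mul ((genBinom_cont (M - 1)).comp hsubc)
    have hGc : Continuous fun s => genBinom M s * genBinom (M - 2) (n - s) :=
      (genBinom_cont M).mul ((genBinom_cont (M - 2)).comp hsubc)
    rw [hAeq, MeasureTheory.integral_Icc_eq_integral_Ioc,
      MeasureTheory.integral_Icc_eq_integral_Ioc,
      ← intervalIntegral.integral_of_le hcd, ← intervalIntegral.integral_of_le hcd]
    -- key a.e. identity on the interval
    have hnull : volume ({n - M + 1, d} : Set ℝ) = 0 :=
      (Set.countable_insert.mpr (Set.countable_singleton d)).measure_zero _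
    have hae : ∀ᵐ x ∂(volume : Measure ℝ), x ∉ ({n - M + 1, d} : Set ℝ) :=
      measure_eq_zero_iff_ae_notMem.mp hnull
    have key : ∫ x in c..d,
        (genBinom (M - 1) x * genBinom (M - 1) (n - x) - genBinom M x * genBinom (M - 2) (n - x))
        = ∫ x in c..d, (Real.Gamma M) ^ 2 / (2 * (M - 1)) * (auxU M n (x + 1) - auxU M n x) := by
      apply intervalIntegral.integral_congr_ae
      filter_upwards [hae] with x hx hmem
      rw [Set.uIoc_of_le hcd] at hmem
      simp only [Set.mem_insert_iff, Set.mem_singleton_iff, not_or] at hx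
      obtain ⟨hx1, hx2⟩ := hx
      have hxd : x < d := lt_of_le_of_ne hmem.2 hx2
      apply key_identity M n x hM
      · linarith [hmem.1]
      · linarith [hmem.1]
      · linarith [hmem.1]
      · have : c < x := hmem.1
        rw [hcdef] at this; linarith
      · intro h; apply hx1; linarith
    have hInt1 : ∫ x in c..d, (Real.Gamma M) ^ 2 / (2 * (M - 1)) * (auxU M n (x + 1) - auxU M n x)
        = (Real.Gamma M) ^ 2 / (2 * (M - 1)) * ∫ x in c..d, (auxU M n (x + 1) - auxU M n x) :=
      intervalIntegral.integral_const_mul _ _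
    have hUint : ∀ a b : ℝ, IntervalIntegrable (auxU M n) volume a b :=
      fun a b => hUc.intervalIntegrable a b
    have hUint' : ∀ a b : ℝ, IntervalIntegrable (fun x => auxU M n (x + 1)) volume a b :=
      fun a b => hUc'.intervalIntegrable a b
    have htel : ∫ x in c..d, (auxU M n (x + 1) - auxU M n x)
        = (∫ x in d..(d + 1), auxU M n x) - ∫ x in c..(c + 1), auxU M n x := by
      rw [intervalIntegral.integral_sub (hUint' c d) (hUint c d)]
      have h1 : ∫ x in c..d, auxU M n (x + 1) = ∫ x in (c + 1)..(d + 1), auxU M n x :=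
        intervalIntegral.integral_comp_add_right _ 1
      have h2 := intervalIntegral.integral_add_adjacent_intervals
        (hUint c (c + 1)) (hUint (c + 1) (d + 1))
      have h3 := intervalIntegral.integral_add_adjacent_intervals
        (hUint c d) (hUint d (d + 1))
      rw [h1]; linarith
    have hrefl : ∫ x in c..(c + 1), auxU M n x = ∫ x in d..(d + 1), auxU M n (n + 1 - x) := by
      rw [intervalIntegral.integral_comp_sub_left (auxU M n) (n + 1)]
      rw [show n + 1 - (d + 1) = c by rw [hcdef]; ring, show n + 1 - d = c + 1 by rw [hcdef]; ring]
    have hWint : ∀ a b : ℝ, IntervalIntegrable (fun x => auxU M n x - auxU M n (n + 1 - x)) volume a b :=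
      fun a b => (hUc.sub hUcr).intervalIntegrable a b
    have hW : (∫ x in d..(d + 1), auxU M n x) - (∫ x in c..(c + 1), auxU M n x)
        = ∫ x in d..(d + 1), (auxU M n x - auxU M n (n + 1 - x)) := by
      rw [hrefl, ← intervalIntegral.integral_sub (hUint d (d + 1))
        (hUcr.intervalIntegrable d (d + 1))]
    -- positivity of the reflected integral
    have hptwise : ∀ x : ℝ, (n + 1) / 2 ≤ x → x ≤ min n M + 1 →
        0 ≤ auxU M n x - auxU M n (n + 1 - x) := by
      intro x hx1 hx2
      rw [auxU_reflect]
      have hxn : x ≤ n + 1 := by linarith [min_le_left n M]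
      have hxM : x ≤ M + 1 := by linarith [min_le_right n M]
      apply mul_nonneg (by linarith)
      have g1 : (0:ℝ) ≤ (Real.Gamma x)⁻¹ :=
        inv_nonneg.mpr (Real.Gamma_nonneg_of_nonneg (by linarith))
      have g2 : (0:ℝ) ≤ (Real.Gamma (n - x + 1))⁻¹ :=
        inv_nonneg.mpr (Real.Gamma_nonneg_of_nonneg (by linarith))
      have g3 : (0:ℝ) ≤ (Real.Gamma (M - x + 1))⁻¹ :=
        inv_nonneg.mpr (Real.Gamma_nonneg_of_nonneg (by linarith))
      have g4 : (0:ℝ) ≤ (Real.Gamma (M - n + x))⁻¹ :=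
        inv_nonneg.mpr (Real.Gamma_nonneg_of_nonneg (by linarith))
      exact mul_nonneg (mul_nonneg (mul_nonneg g1 g2) g3) g4
    have hdmin : d ≤ min n M := le_min hdn hdM
    have hpos : 0 ≤ ∫ x in d..(d + 1), (auxU M n x - auxU M n (n + 1 - x)) := by
      by_cases hsplit : (n + 1) / 2 ≤ d
      · apply intervalIntegral.integral_nonneg (by linarith)
        intro u hu
        exact hptwise u (le_trans hsplit hu.1) (by linarith [hu.2, hdmin])
      · push_neg at hsplit
        have hord1 : d ≤ n + 1 - d := by linarith
        have hord2 : n + 1 - d ≤ d + 1 := by linarith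
        have hadj := intervalIntegral.integral_add_adjacent_intervals
          (hWint d (n + 1 - d)) (hWint (n + 1 - d) (d + 1))
        have hzero : ∫ x in d..(n + 1 - d), (auxU M n x - auxU M n (n + 1 - x)) = 0 := by
          have hcs := intervalIntegral.integral_comp_sub_left
            (fun y => auxU M n y - auxU M n (n + 1 - y)) (n + 1) (a := d) (b := n + 1 - d)
          rw [show n + 1 - (n + 1 - d) = d by ring] at hcs
          have hneg : ∀ x : ℝ, auxU M n (n + 1 - x) - auxU M n (n + 1 - (n + 1 - x))
              = -(auxU M n x - auxU M n (n + 1 - x)) := by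
            intro x; rw [show n + 1 - (n + 1 - x) = x by ring]; ring
          simp only [hneg] at hcs
          rw [intervalIntegral.integral_neg] at hcs
          linarith
        have hpos2 : 0 ≤ ∫ x in (n + 1 - d)..(d + 1), (auxU M n x - auxU M n (n + 1 - x)) := by
          apply intervalIntegral.integral_nonneg hord2
          intro u hu
          exact hptwise u (by linarith [hu.1]) (by linarith [hu.2, hdmin])
        linarith
    -- assemble
    have hsub := intervalIntegral.integral_sub (hFc.intervalIntegrable (μ := volume) c d)
      (hGc.intervalIntegrable (μ := volume) c d)
    have hcoef : 0 ≤ (Real.Gamma M) ^ 2 / (2 * (M - 1)) := div_nonneg (sq_nonneg _) (by linarith)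
    have hfinal : 0 ≤ (Real.Gamma M) ^ 2 / (2 * (M - 1)) *
        ∫ x in c..d, (auxU M n (x + 1) - auxU M n x) := by
      rw [htel, hW]; exact mul_nonneg hcoef hpos
    rw [key, hInt1] at hsub
    linarith [hsub, hfinal]
  · -- degenerate case: A has measure zero
    have hAsub : A ⊆ {n / 2} := by
      intro s hs
      rw [hA] at hs
      obtain ⟨_, h0s, hsM, h0ns, hnsM⟩ := hs
      simp only [mem_singleton_iff]
      push_neg at hcase
      rcases le_or_gt n 0 with h | h
      · linarith
      · have := hcase h; linarith
    have hA0 : volume A = 0 := measure_mono_null hAsub (measure_singleton _)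
    rw [setIntegral_measure_zero _ hA0, setIntegral_measure_zero _ hA0]
end

section
/- Let M > 1, q > 0 and n > -2 be real numbers, and let B = {s ∈ ℝ : |s - (n + 1 - s)| ≤ q, 0 ≤ s ≤ M, and 0 ≤ n + 1 - s ≤ M}. Then ∫_B C(M-1, s)·C(M-1, n-s) ds ≤ ∫_B C(M, s)·C(M-2, n-s) ds. -/
open Real MeasureTheory Set

lemma GammaNZ {x : ℝ} (h1 : -1 < x) (h2 : x ≠ 0) : Real.Gamma x ≠ 0 := by
  refine Real.Gamma_ne_zero fun m => ?_
  cases m with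
  | zero => simpa using h2
  | succ k =>
    intro h
    have : (0:ℝ) ≤ k := Nat.cast_nonneg k
    rw [h] at h1
    push_cast at h1
    linarith

lemma contInvGamma : Continuous fun s : ℝ => (Real.Gamma s)⁻¹ := by
  have h := Complex.differentiable_one_div_Gamma.continuous
  have : (fun s : ℝ => (Real.Gamma s)⁻¹) =
      fun s : ℝ => ((Complex.Gamma (s : ℂ))⁻¹).re := by
    funext s
    rw [Complex.Gamma_ofReal]
    simp [← Complex.ofReal_inv]
  rw [this]
  exact Complex.continuous_re.comp (h.comp Complex.continuous_ofReal)

lemma contGB (M : ℝ) (u : ℝ → ℝ) (hu : Continuous u) :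
    Continuous fun s : ℝ => genBinom M (u s) := by
  have : (fun s : ℝ => genBinom M (u s)) = fun s : ℝ =>
      Real.Gamma (M+1) * (Real.Gamma (u s + 1))⁻¹ * (Real.Gamma (M - u s + 1))⁻¹ := by
    funext s
    rw [genBinom, div_eq_mul_inv, mul_inv, mul_assoc]
  rw [this]
  exact (continuous_const.mul (contInvGamma.comp (by continuity))).mul
    (contInvGamma.comp (by continuity))

lemma aeNe (a : ℝ) : ∀ᵐ x : ℝ, x ≠ a := by
  rw [MeasureTheory.ae_iff]
  simp only [ne_eq, not_not, setOf_eq_eq_singleton]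
  exact Real.volume_singleton

set_option maxHeartbeats 1000000 in
lemma telescopeId (M n s : ℝ) (hM : 1 < M) (hs0 : 0 < s) (hsM : s < M)
    (hsn : s < n + 1) (hsl : n + 1 - M < s) (hne : s ≠ n) :
    genBinom M s * genBinom (M-2) (n-s) - genBinom (M-1) s * genBinom (M-1) (n-s)
      = genBinom (M-1) (s-1) * genBinom (M-2) (n-s)
        - genBinom (M-1) (s+1-1) * genBinom (M-2) (n-(s+1)) := by
  have hM1 : M - 1 ≠ 0 := by linarith
  have hMs : M - s ≠ 0 := by linarith
  have hns : n - s ≠ 0 := fun h => hne (by linarith)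
  have hMns : M - n + s - 1 ≠ 0 := by linarith
  have e1 : Real.Gamma (M + 1) = M * Real.Gamma M := Real.Gamma_add_one (by linarith)
  have e2 : Real.Gamma M = (M - 1) * Real.Gamma (M - 1) := by
    have := Real.Gamma_add_one hM1
    rwa [show M - 1 + 1 = M by ring] at this
  have e3 : Real.Gamma (s + 1) = s * Real.Gamma s := Real.Gamma_add_one hs0.ne'
  have e4 : Real.Gamma (M - s + 1) = (M - s) * Real.Gamma (M - s) :=
    Real.Gamma_add_one hMs
  have e5 : Real.Gamma (n - s + 1) = (n - s) * Real.Gamma (n - s) :=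
    Real.Gamma_add_one hns
  have e6 : Real.Gamma (M - n + s) = (M - n + s - 1) * Real.Gamma (M - n + s - 1) := by
    have := Real.Gamma_add_one hMns
    rwa [show M - n + s - 1 + 1 = M - n + s by ring] at this
  have g1 : Real.Gamma s ≠ 0 := (Real.Gamma_pos_of_pos hs0).ne'
  have g2 : Real.Gamma (M - s) ≠ 0 := (Real.Gamma_pos_of_pos (by linarith)).ne'
  have g3 : Real.Gamma (n - s) ≠ 0 := GammaNZ (by linarith) hns
  have g4 : Real.Gamma (M - n + s - 1) ≠ 0 := (Real.Gamma_pos_of_pos (by linarith)).ne'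
  have t1 : genBinom M s * genBinom (M-2) (n-s)
      = (M * (M-1) * (M-n+s-1) * Real.Gamma (M-1)^2) *
        (s * (M-s) * (n-s) * (M-n+s-1) * Real.Gamma s * Real.Gamma (M-s) *
          Real.Gamma (n-s) * Real.Gamma (M-n+s-1))⁻¹ := by
    simp only [genBinom]
    rw [show M - 2 + 1 = M - 1 by ring, show M - 2 - (n - s) + 1 = M - n + s - 1 by ring,
      e1, e2, e3, e4, e5]
    field_simp
  have t2 : genBinom (M-1) s * genBinom (M-1) (n-s)
      = ((M-1)^2 * (M-s) * Real.Gamma (M-1)^2) *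
        (s * (M-s) * (n-s) * (M-n+s-1) * Real.Gamma s * Real.Gamma (M-s) *
          Real.Gamma (n-s) * Real.Gamma (M-n+s-1))⁻¹ := by
    simp only [genBinom]
    rw [show M - 1 + 1 = M by ring, show M - 1 - s + 1 = M - s by ring,
      show M - 1 - (n - s) + 1 = M - n + s by ring, e2, e3, e5, e6]
    field_simp
  have t3 : genBinom (M-1) (s-1) * genBinom (M-2) (n-s)
      = ((M-1) * s * (M-n+s-1) * Real.Gamma (M-1)^2) *
        (s * (M-s) * (n-s) * (M-n+s-1) * Real.Gamma s * Real.Gamma (M-s) *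
          Real.Gamma (n-s) * Real.Gamma (M-n+s-1))⁻¹ := by
    simp only [genBinom]
    rw [show M - 1 + 1 = M by ring, show s - 1 + 1 = s by ring,
      show M - 1 - (s - 1) + 1 = M - s + 1 by ring,
      show M - 2 + 1 = M - 1 by ring, show M - 2 - (n - s) + 1 = M - n + s - 1 by ring,
      e2, e4, e5]
    field_simp
  have t4 : genBinom (M-1) (s+1-1) * genBinom (M-2) (n-(s+1))
      = ((M-1) * (M-s) * (n-s) * Real.Gamma (M-1)^2) *
        (s * (M-s) * (n-s) * (M-n+s-1) * Real.Gamma s * Real.Gamma (M-s) *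
          Real.Gamma (n-s) * Real.Gamma (M-n+s-1))⁻¹ := by
    simp only [genBinom]
    rw [show M - 1 + 1 = M by ring, show s + 1 - 1 + 1 = s + 1 by ring,
      show M - 1 - (s + 1 - 1) + 1 = M - s by ring,
      show M - 2 + 1 = M - 1 by ring, show n - (s + 1) + 1 = n - s by ring,
      show M - 2 - (n - (s + 1)) + 1 = M - n + s by ring,
      e2, e3, e6]
    field_simp
  rw [t1, t2, t3, t4]
  ring

set_option maxHeartbeats 1000000 in
lemma reflNonneg (M n s : ℝ) (hM : 1 < M) (hs0 : 0 < s) (hs1 : s ≠ 1)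
    (hsn : s < n + 1) (hsl : n + 1 - M < s) (hsM : s < M + 1) (h2s : 2*s ≤ n + 2) :
    genBinom (M-1) (n+2-s-1) * genBinom (M-2) (n-(n+2-s))
      ≤ genBinom (M-1) (s-1) * genBinom (M-2) (n-s) := by
  have hM1 : M - 1 ≠ 0 := by linarith
  have hns : (0:ℝ) < n + 1 - s := by linarith
  have hs1' : s - 1 ≠ 0 := sub_ne_zero.2 hs1
  have e7 : Real.Gamma (n + 2 - s) = (n + 1 - s) * Real.Gamma (n + 1 - s) := by
    have := Real.Gamma_add_one hns.ne'
    rwa [show n + 1 - s + 1 = n + 2 - s by ring] at this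
  have e8 : Real.Gamma s = (s - 1) * Real.Gamma (s - 1) := by
    have := Real.Gamma_add_one hs1'
    rwa [show s - 1 + 1 = s by ring] at this
  have g1 : Real.Gamma (s-1) ≠ 0 := GammaNZ (by linarith) hs1'
  have g2 : (0:ℝ) < Real.Gamma (M - s + 1) := Real.Gamma_pos_of_pos (by linarith)
  have g3 : (0:ℝ) < Real.Gamma (n + 1 - s) := Real.Gamma_pos_of_pos (by linarith)
  have g4 : (0:ℝ) < Real.Gamma (M - n + s - 1) := Real.Gamma_pos_of_pos (by linarith)
  have hTpos : 0 < genBinom (M-1) (s-1) * genBinom (M-2) (n-s) := by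
    simp only [genBinom]
    apply mul_pos <;> apply div_pos
    · exact Real.Gamma_pos_of_pos (by linarith)
    · apply mul_pos
      · exact Real.Gamma_pos_of_pos (by linarith)
      · exact Real.Gamma_pos_of_pos (by linarith)
    · exact Real.Gamma_pos_of_pos (by linarith)
    · apply mul_pos
      · exact Real.Gamma_pos_of_pos (by linarith)
      · exact Real.Gamma_pos_of_pos (by linarith)
  have key : genBinom (M-1) (n+2-s-1) * genBinom (M-2) (n-(n+2-s)) * (n+1-s)
      = genBinom (M-1) (s-1) * genBinom (M-2) (n-s) * (s-1) := by
    simp only [genBinom]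
    rw [show M - 1 + 1 = M by ring, show n + 2 - s - 1 + 1 = n + 2 - s by ring,
      show M - 1 - (n + 2 - s - 1) + 1 = M - n + s - 1 by ring,
      show M - 2 + 1 = M - 1 by ring, show n - (n + 2 - s) + 1 = s - 1 by ring,
      show M - 2 - (n - (n + 2 - s)) + 1 = M - s + 1 by ring,
      show s - 1 + 1 = s by ring, show M - 1 - (s - 1) + 1 = M - s + 1 by ring,
      show n - s + 1 = n + 1 - s by ring,
      show M - 2 - (n - s) + 1 = M - n + s - 1 by ring,
      e7, e8]
    field_simp
  nlinarith [hTpos, hns, key]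

set_option maxHeartbeats 2000000 in
theorem genBinom_integral_ineq_B
    (M q n : ℝ) (hM : 1 < M) (hq : 0 < q) (hn : -2 < n)
    (B : Set ℝ)
    (hB : B = {s : ℝ | |s - (n + 1 - s)| ≤ q ∧ 0 ≤ s ∧ s ≤ M ∧
      0 ≤ n + 1 - s ∧ n + 1 - s ≤ M}) :
    (∫ s in B, genBinom (M - 1) s * genBinom (M - 1) (n - s)) ≤
      ∫ s in B, genBinom M s * genBinom (M - 2) (n - s) := by
  set lo : ℝ := max (max 0 (n + 1 - M)) ((n + 1 - q) / 2) with hlo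
  set hi : ℝ := n + 1 - lo with hhi
  have l0 : (0:ℝ) ≤ lo := le_max_of_le_left (le_max_left _ _)
  have l1 : n + 1 - M ≤ lo := le_max_of_le_left (le_max_right _ _)
  have hiM : hi ≤ M := by rw [hhi]; linarith
  have hin : hi ≤ n + 1 := by rw [hhi]; linarith
  have hlohi : lo + hi = n + 1 := by rw [hhi]; ring
  have hBIcc : B = Icc lo hi := by
    rw [hB]
    ext s
    simp only [mem_setOf_eq, mem_Icc, abs_le, hhi, hlo, max_le_iff]
    constructor
    · rintro ⟨⟨h1, h2⟩, h3, h4, h5, h6⟩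
      refine ⟨⟨⟨h3, by linarith⟩, by linarith⟩, ?_⟩
      have : max (max 0 (n + 1 - M)) ((n + 1 - q) / 2) ≤ n + 1 - s := by
        simp only [max_le_iff]
        exact ⟨⟨h5, by linarith⟩, by linarith⟩
      linarith
    · rintro ⟨⟨⟨h3, h4⟩, h1⟩, h2⟩
      have l2 : (n + 1 - q)/2 ≤ lo := le_max_right _ _
      refine ⟨⟨by linarith, by linarith⟩, h3, by linarith, by linarith, by linarith⟩
  rw [hBIcc]
  by_cases hlh : lo ≤ hi
  · -- main case
    set F : ℝ → ℝ := fun s => genBinom (M-1) s * genBinom (M-1) (n-s) with hF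
    set G : ℝ → ℝ := fun s => genBinom M s * genBinom (M-2) (n-s) with hG
    set T : ℝ → ℝ := fun s => genBinom (M-1) (s-1) * genBinom (M-2) (n-s) with hT
    have hFc : Continuous F := by
      rw [hF]
      exact (contGB (M-1) id continuous_id).mul
        (contGB (M-1) (fun s => n - s) (continuous_const.sub continuous_id))
    have hGc : Continuous G := by
      rw [hG]
      exact (contGB M id continuous_id).mul
        (contGB (M-2) (fun s => n - s) (continuous_const.sub continuous_id))
    have hTc : Continuous T := by
      rw [hT]
      exact (contGB (M-1) (fun s => s - 1) (continuous_id.sub continuous_const)).mul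
        (contGB (M-2) (fun s => n - s) (continuous_const.sub continuous_id))
    have hTc' : Continuous fun s => T (s+1) := hTc.comp (continuous_id.add continuous_const)
    have hTc'' : Continuous fun s => T (n+2-s) := hTc.comp (continuous_const.sub continuous_id)
    rw [integral_Icc_eq_integral_Ioc, integral_Icc_eq_integral_Ioc,
      ← intervalIntegral.integral_of_le hlh, ← intervalIntegral.integral_of_le hlh]
    have hsub : ∫ s in lo..hi, (G s - F s) =
        (∫ s in lo..hi, G s) - ∫ s in lo..hi, F s :=
      intervalIntegral.integral_sub (hGc.intervalIntegrable _ _) (hFc.intervalIntegrable _ _)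
    have step1 : ∫ s in lo..hi, (G s - F s) = ∫ s in lo..hi, (T s - T (s+1)) := by
      apply intervalIntegral.integral_congr_ae
      filter_upwards [aeNe n, aeNe hi] with x hx1 hx2 hmem
      rw [Set.uIoc_of_le hlh] at hmem
      obtain ⟨hx3, hx4⟩ := hmem
      have hx5 : x < hi := lt_of_le_of_ne hx4 hx2
      simp only [hF, hG, hT]
      exact telescopeId M n x hM (by linarith) (by linarith) (by linarith)
        (by linarith) hx1
    have step2 : ∫ s in lo..hi, (T s - T (s+1)) =
        (∫ s in lo..hi, T s) - ∫ s in lo..hi, T (s+1) :=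
      intervalIntegral.integral_sub (hTc.intervalIntegrable _ _) (hTc'.intervalIntegrable _ _)
    have step3 : ∫ s in lo..hi, T (s+1) = ∫ s in (lo+1)..(hi+1), T s :=
      intervalIntegral.integral_comp_add_right (f := T) 1
    have a1 : (∫ s in lo..(lo+1), T s) + ∫ s in (lo+1)..(hi+1), T s = ∫ s in lo..hi+1, T s :=
      intervalIntegral.integral_add_adjacent_intervals
        (hTc.intervalIntegrable _ _) (hTc.intervalIntegrable _ _)
    have a2 : (∫ s in lo..hi, T s) + ∫ s in hi..(hi+1), T s = ∫ s in lo..hi+1, T s :=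
      intervalIntegral.integral_add_adjacent_intervals
        (hTc.intervalIntegrable _ _) (hTc.intervalIntegrable _ _)
    have step5 : ∫ s in lo..(lo+1), T (n+2-s) = ∫ s in hi..(hi+1), T s := by
      have h := intervalIntegral.integral_comp_sub_left (a := lo) (b := lo+1) (f := T) (n+2)
      rwa [show n+2-(lo+1) = hi by rw [hhi]; ring, show n+2-lo = hi+1 by rw [hhi]; ring] at h
    have step6 : ∫ s in lo..(lo+1), (T s - T (n+2-s)) =
        (∫ s in lo..(lo+1), T s) - ∫ s in lo..(lo+1), T (n+2-s) :=
      intervalIntegral.integral_sub (hTc.intervalIntegrable _ _) (hTc''.intervalIntegrable _ _)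
    have pos : 0 ≤ ∫ s in lo..(lo+1), (T s - T (n+2-s)) := by
      set c' : ℝ := min (lo+1) hi with hc'
      have hc1 : lo ≤ c' := le_min (by linarith) hlh
      have hc2 : c' ≤ lo + 1 := min_le_left _ _
      have hc3 : c' ≤ hi := min_le_right _ _
      have sp : (∫ s in lo..c', (T s - T (n+2-s)))
          + ∫ s in c'..(lo+1), (T s - T (n+2-s)) = ∫ s in lo..(lo+1), (T s - T (n+2-s)) :=
        intervalIntegral.integral_add_adjacent_intervals
          ((hTc.sub hTc'').intervalIntegrable _ _) ((hTc.sub hTc'').intervalIntegrable _ _)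
      have part2 : ∫ s in c'..(lo+1), (T s - T (n+2-s)) = 0 := by
        rcases le_or_gt hi (lo+1) with hcase | hcase
        · have hc'eq : c' = hi := min_eq_right hcase
          have s1 : ∫ s in hi..(lo+1), T (n+2-s) = ∫ s in hi..(lo+1), T s := by
            have h := intervalIntegral.integral_comp_sub_left (a := hi) (b := lo+1)
              (f := T) (n+2)
            rwa [show n+2-(lo+1) = hi by rw [hhi]; ring,
              show n+2-hi = lo+1 by rw [hhi]; ring] at h
          rw [hc'eq, intervalIntegral.integral_sub (hTc.intervalIntegrable _ _)
            (hTc''.intervalIntegrable _ _), s1, sub_self]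
        · have hc'eq : c' = lo+1 := min_eq_left hcase.le
          rw [hc'eq, intervalIntegral.integral_same]
      have part1 : 0 ≤ ∫ s in lo..c', (T s - T (n+2-s)) := by
        apply intervalIntegral.integral_nonneg_of_ae_restrict hc1
        filter_upwards [ae_restrict_mem measurableSet_Icc,
          ae_restrict_of_ae (aeNe lo), ae_restrict_of_ae (aeNe c'),
          ae_restrict_of_ae (aeNe (1:ℝ))] with x hx hne1 hne2 hne3
        obtain ⟨hxa, hxb⟩ := hx
        have hxa' : lo < x := lt_of_le_of_ne hxa (Ne.symm hne1)
        have hxb' : x < c' := lt_of_le_of_ne hxb hne2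
        have hxlo1 : x < lo + 1 := lt_of_lt_of_le hxb' hc2
        have hxhi : x < hi := lt_of_lt_of_le hxb' hc3
        simp only [hT, Pi.zero_apply, Pi.sub_apply]
        have := reflNonneg M n x hM (by linarith) hne3 (by linarith) (by linarith)
          (by linarith) (by linarith)
        linarith [this]
      linarith [sp, part1, part2]
    linarith [hsub, step1, step2, step3, a1, a2, step5, step6, pos]
  · rw [Icc_eq_empty hlh]
    rw [MeasureTheory.setIntegral_empty, MeasureTheory.setIntegral_empty]
end

section
/- Let M be a positive integer, n a nonnegative integer, and k an integer with k ≤ (n+1)/2. Then Σ_{i=k}^{n-k} (M-1 choose i)·(M-1 choose n-i) ≥ Σ_{i=k}^{n-k} (M choose i)·(M-2 choose n-i), where by convention (M choose i) = 0 whenever i < 0 or i > M. -/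
/-- Binomial coefficient with integer arguments, zero by convention when the
lower index is negative or exceeds the upper index. -/
def binomZ (n k : ℤ) : ℕ :=
  if 0 ≤ k ∧ k ≤ n then n.toNat.choose k.toNat else 0

lemma binomZ_eq {n k : ℤ} (hn : 0 ≤ n) (hk : 0 ≤ k) :
    binomZ n k = n.toNat.choose k.toNat := by
  unfold binomZ
  split
  · rfl
  · rename_i h
    have : n < k := by omega
    exact (Nat.choose_eq_zero_of_lt (by omega)).symm

lemma binomZ_neg {n k : ℤ} (h : k < 0 ∨ n < k) : binomZ n k = 0 := by
  unfold binomZ; rw [if_neg]; omega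

lemma pascal {n : ℤ} (hn : 1 ≤ n) (k : ℤ) :
    binomZ n k = binomZ (n-1) k + binomZ (n-1) (k-1) := by
  rcases lt_trichotomy k 0 with h | h | h
  · rw [binomZ_neg (Or.inl h), binomZ_neg (Or.inl h), binomZ_neg (Or.inl (by omega))]
  · subst h
    rw [show (0:ℤ) - 1 = -1 by ring,
      binomZ_neg (n := n-1) (k := -1) (Or.inl (by omega)),
      binomZ_eq (by omega) le_rfl, binomZ_eq (by omega) le_rfl]
    simp
  · rw [binomZ_eq (by omega) (by omega), binomZ_eq (by omega) (by omega),
      binomZ_eq (by omega) (by omega)]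
    have h1 : n.toNat = (n-1).toNat + 1 := by omega
    have h2 : k.toNat = (k-1).toNat + 1 := by omega
    rw [h1, h2, Nat.choose_succ_succ]
    simp only [Nat.succ_eq_add_one]
    omega

lemma key {m : ℤ} (hm : 1 ≤ m) {a b : ℤ} (hab : a ≤ b) :
    binomZ m a * binomZ (m-1) b ≤ binomZ m b * binomZ (m-1) a := by
  rcases lt_or_ge a 0 with h | h
  · rw [binomZ_neg (Or.inl h)]; simp
  rcases lt_or_ge (m-1) b with h2 | h2
  · rw [binomZ_neg (n := m-1) (Or.inr h2)]; simp
  -- now 0 ≤ a ≤ b ≤ m-1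
  rw [binomZ_eq (by omega) h, binomZ_eq (by omega) (by omega),
    binomZ_eq (by omega) (by omega), binomZ_eq (by omega) h]
  set m' := m.toNat with hm'
  set a' := a.toNat with ha'
  set b' := b.toNat with hb'
  have hm1 : (m-1).toNat = m' - 1 := by omega
  have hab' : a' ≤ b' := by omega
  have hbm : b' ≤ m' - 1 := by omega
  have h1 : 1 ≤ m' := by omega
  rw [hm1]
  have key1 : ∀ j : ℕ, (m'-1).choose j * m' = m'.choose j * (m' - j) := by
    intro j
    have := Nat.choose_mul_succ_eq (m'-1) j
    rwa [Nat.sub_add_cancel h1] at this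
  apply Nat.le_of_mul_le_mul_right _ (show 0 < m' by omega)
  calc m'.choose a' * (m'-1).choose b' * m'
      = m'.choose a' * ((m'-1).choose b' * m') := by ring
    _ = m'.choose a' * (m'.choose b' * (m' - b')) := by rw [key1]
    _ ≤ m'.choose b' * (m'.choose a' * (m' - a')) := by
        have : m' - b' ≤ m' - a' := by omega
        calc m'.choose a' * (m'.choose b' * (m' - b'))
            = m'.choose b' * m'.choose a' * (m'-b') := by ring
          _ ≤ m'.choose b' * m'.choose a' * (m'-a') := Nat.mul_le_mul_left _ this
          _ = m'.choose b' * (m'.choose a' * (m' - a')) := by ring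
    _ = m'.choose b' * ((m'-1).choose a' * m') := by rw [key1]
    _ = m'.choose b' * (m'-1).choose a' * m' := by ring

lemma telescope (g : ℤ → ℤ) (a : ℤ) :
    ∀ b : ℤ, a - 1 ≤ b → ∑ i ∈ Finset.Icc a b, (g (i+1) - g i) = g (b+1) - g a := by
  refine Int.le_induction ?_ ?_
  · rw [show Finset.Icc a (a-1) = ∅ by rw [Finset.Icc_eq_empty]; omega]
    simp [sub_add_cancel]
  · intro b hb ih
    have hab : a ≤ b + 1 := by omega
    have : Finset.Icc a (b+1) = insert (b+1) (Finset.Icc a b) := by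
      ext x; simp only [Finset.mem_Icc, Finset.mem_insert]; omega
    rw [this, Finset.sum_insert (by simp), ih]
    ring

theorem binom_sum_ineq_one
    (M : ℕ) (hM : 0 < M) (n : ℕ) (k : ℤ) (hk : 2 * k ≤ (n : ℤ) + 1) :
    (∑ i ∈ Finset.Icc k ((n : ℤ) - k), binomZ ((M : ℤ)) i * binomZ ((M : ℤ) - 2) (n - i)) ≤
      ∑ i ∈ Finset.Icc k ((n : ℤ) - k), binomZ ((M : ℤ) - 1) i * binomZ ((M : ℤ) - 1) (n - i) := by
  rcases eq_or_lt_of_le (Nat.succ_le_of_lt hM) with h1 | h2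
  · -- M = 1
    have hM1 : (M : ℤ) = 1 := by omega
    have : ∀ i ∈ Finset.Icc k ((n : ℤ) - k),
        binomZ ((M : ℤ)) i * binomZ ((M : ℤ) - 2) (n - i) = 0 := by
      intro i _
      rw [hM1, binomZ_neg (n := (1:ℤ)-2) (k := n - i)]
      · simp
      · omega
    rw [Finset.sum_congr rfl this]
    simp
  · -- M ≥ 2
    have hM2 : (2:ℤ) ≤ (M:ℤ) := by exact_mod_cast h2
    rw [← Nat.cast_le (α := ℤ)]
    push_cast
    rw [← sub_nonneg, ← Finset.sum_sub_distrib]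
    set g : ℤ → ℤ := fun i => (binomZ ((M:ℤ)-1) (i-1) : ℤ) * (binomZ ((M:ℤ)-2) (n-i) : ℤ) with hg
    have hdiff : ∀ i : ℤ,
        (binomZ ((M:ℤ)-1) i : ℤ) * (binomZ ((M:ℤ)-1) (n-i) : ℤ)
          - (binomZ ((M:ℤ)) i : ℤ) * (binomZ ((M:ℤ)-2) (n-i) : ℤ)
        = g (i+1) - g i := by
      intro i
      have p1 := pascal (n := (M:ℤ)) (by omega) i
      have p2 := pascal (n := (M:ℤ)-1) (by omega) (n - i)
      have e1 : ((M:ℤ))-1-1 = (M:ℤ)-2 := by ring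
      rw [e1] at p2
      simp only [hg]
      rw [p1, p2]
      push_cast
      have : (n:ℤ) - (i+1) = n - i - 1 := by ring
      rw [this]
      have : (i:ℤ) + 1 - 1 = i := by ring
      rw [this]
      ring
    calc (0:ℤ) ≤ g ((n:ℤ) - k + 1) - g k := by
          simp only [hg]
          have e1 : (n:ℤ) - k + 1 - 1 = n - k := by ring
          have e2 : (n:ℤ) - ((n:ℤ) - k + 1) = k - 1 := by ring
          rw [e1, e2]
          have := key (m := (M:ℤ)-1) (by omega) (a := k - 1) (b := (n:ℤ) - k) (by omega)
          have e3 : ((M:ℤ)-1)-1 = (M:ℤ)-2 := by ring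
          rw [e3] at this
          have : (binomZ ((M:ℤ)-1) (k-1) * binomZ ((M:ℤ)-2) ((n:ℤ)-k) : ℤ)
              ≤ (binomZ ((M:ℤ)-1) ((n:ℤ)-k) * binomZ ((M:ℤ)-2) (k-1) : ℤ) := by
            exact_mod_cast this
          linarith
      _ = ∑ i ∈ Finset.Icc k ((n : ℤ) - k), (g (i+1) - g i) :=
          (telescope g k ((n:ℤ)-k) (by omega)).symm
      _ = _ := by
          apply Finset.sum_congr rfl
          intro i _
          exact (hdiff i).symm
end

section
/- Let M be a positive integer, n a nonnegative integer, and k an integer with k ≤ (n+1)/2. Then Σ_{i=k}^{n-k} (M-1 choose i)·(M-1 choose n-i) ≥ Σ_{i=k}^{n-k} (M choose i+1)·(M-2 choose n-i-1), where by convention (M choose i) = 0 whenever i < 0 or i > M. -/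
lemma binomZ_of_neg {n k : ℤ} (h : k < 0) : binomZ n k = 0 := by
  unfold binomZ; rw [if_neg]; omega

lemma binomZ_of_gt {n k : ℤ} (h : n < k) : binomZ n k = 0 := by
  unfold binomZ; rw [if_neg]; omega

lemma binomZ_natCast (n k : ℕ) : binomZ (n : ℤ) (k : ℤ) = n.choose k := by
  unfold binomZ
  split
  · simp
  · rename_i h
    symm
    apply Nat.choose_eq_zero_of_lt
    omega

lemma binomZ_pascal (n k : ℤ) (hn : 1 ≤ n) :
    binomZ n k = binomZ (n - 1) (k - 1) + binomZ (n - 1) k := by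
  rcases lt_or_ge k 0 with h | h
  · rw [binomZ_of_neg h, binomZ_of_neg (by omega), binomZ_of_neg h]
  rcases lt_or_ge n k with h2 | h2
  · rw [binomZ_of_gt h2, binomZ_of_gt (by omega), binomZ_of_gt (by omega)]
  rcases eq_or_lt_of_le h with rfl | hk
  · have h0 : binomZ (n - 1) (0 - 1) = 0 := binomZ_of_neg (by omega)
    rw [h0]
    unfold binomZ
    rw [if_pos (by omega), if_pos (by omega)]
    simp
  · -- 1 ≤ k ≤ n
    obtain ⟨m, hm⟩ : ∃ m : ℕ, n = (m : ℤ) + 1 := ⟨(n - 1).toNat, by omega⟩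
    obtain ⟨j, hj⟩ : ∃ j : ℕ, k = (j : ℤ) + 1 := ⟨(k - 1).toNat, by omega⟩
    subst hm hj
    have e1 : binomZ ((m : ℤ) + 1) ((j : ℤ) + 1) = (m + 1).choose (j + 1) := by
      rw [show ((m : ℤ) + 1) = ((m + 1 : ℕ) : ℤ) by push_cast; ring,
        show ((j : ℤ) + 1) = ((j + 1 : ℕ) : ℤ) by push_cast; ring, binomZ_natCast]
    have e2 : binomZ ((m : ℤ) + 1 - 1) ((j : ℤ) + 1 - 1) = m.choose j := by
      rw [show ((m : ℤ) + 1 - 1) = ((m : ℕ) : ℤ) by push_cast; ring,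
        show ((j : ℤ) + 1 - 1) = ((j : ℕ) : ℤ) by push_cast; ring, binomZ_natCast]
    have e3 : binomZ ((m : ℤ) + 1 - 1) ((j : ℤ) + 1) = m.choose (j + 1) := by
      rw [show ((m : ℤ) + 1 - 1) = ((m : ℕ) : ℤ) by push_cast; ring,
        show ((j : ℤ) + 1) = ((j + 1 : ℕ) : ℤ) by push_cast; ring, binomZ_natCast]
    rw [e1, e2, e3, Nat.choose_succ_succ]

lemma key_nat (M a b : ℕ) (hM : 2 ≤ M) (ha : 1 ≤ a) (hab : a ≤ b) :
    (M - 1).choose b * (M - 2).choose (a - 1) ≤ (M - 1).choose a * (M - 2).choose (b - 1) := by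
  have hb : 1 ≤ b := ha.trans hab
  have h1 : (M - 1) * (M - 2).choose (a - 1) = (M - 1).choose a * a := by
    have := Nat.add_one_mul_choose_eq (M - 2) (a - 1)
    simpa [Nat.succ_eq_add_one, show M - 2 + 1 = M - 1 by omega, show a - 1 + 1 = a by omega]
      using this
  have h2 : (M - 1) * (M - 2).choose (b - 1) = (M - 1).choose b * b := by
    have := Nat.add_one_mul_choose_eq (M - 2) (b - 1)
    simpa [Nat.succ_eq_add_one, show M - 2 + 1 = M - 1 by omega, show b - 1 + 1 = b by omega]
      using this
  have hpos : 0 < M - 1 := by omega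
  apply Nat.le_of_mul_le_mul_left _ hpos
  calc (M - 1) * ((M - 1).choose b * (M - 2).choose (a - 1))
      = (M - 1).choose b * ((M - 1) * (M - 2).choose (a - 1)) := by ring
    _ = (M - 1).choose b * ((M - 1).choose a * a) := by rw [h1]
    _ ≤ (M - 1).choose b * ((M - 1).choose a * b) :=
        Nat.mul_le_mul_left _ (Nat.mul_le_mul_left _ hab)
    _ = (M - 1).choose a * ((M - 1).choose b * b) := by ring
    _ = (M - 1).choose a * ((M - 1) * (M - 2).choose (b - 1)) := by rw [h2]
    _ = (M - 1) * ((M - 1).choose a * (M - 2).choose (b - 1)) := by ring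

lemma f_ineq (M : ℕ) (hM : 2 ≤ M) (n : ℕ) (k : ℤ) (hk : 2 * k ≤ (n : ℤ) + 1) :
    binomZ ((M : ℤ) - 1) ((n : ℤ) + 1 - k) * binomZ ((M : ℤ) - 2) (k - 1) ≤
      binomZ ((M : ℤ) - 1) k * binomZ ((M : ℤ) - 2) ((n : ℤ) - k) := by
  rcases lt_or_ge (k - 1) 0 with h | h
  · rw [binomZ_of_neg h]; simp
  rcases lt_or_ge ((M : ℤ) - 1) ((n : ℤ) + 1 - k) with h2 | h2
  · rw [binomZ_of_gt h2]; simp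
  · -- 1 ≤ k, k ≤ n + 1 - k ≤ M - 1
    have hk1 : 1 ≤ k := by omega
    obtain ⟨a, rfl⟩ : ∃ a : ℕ, k = (a : ℤ) := ⟨k.toNat, by omega⟩
    have e1 : (M : ℤ) - 1 = ((M - 1 : ℕ) : ℤ) := by omega
    have e2 : (M : ℤ) - 2 = ((M - 2 : ℕ) : ℤ) := by omega
    have e3 : (n : ℤ) + 1 - a = ((n + 1 - a : ℕ) : ℤ) := by omega
    have e4 : (a : ℤ) - 1 = ((a - 1 : ℕ) : ℤ) := by omega
    have e5 : (n : ℤ) - a = ((n + 1 - a - 1 : ℕ) : ℤ) := by omega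
    rw [e1, e2, e3, e4, e5, binomZ_natCast, binomZ_natCast, binomZ_natCast, binomZ_natCast]
    exact key_nat M a (n + 1 - a) hM (by omega) (by omega)

theorem binom_sum_ineq_three
    (M : ℕ) (hM : 0 < M) (n : ℕ) (k : ℤ) (hk : 2 * k ≤ (n : ℤ) + 1) :
    (∑ i ∈ Finset.Icc k ((n : ℤ) - k),
        binomZ ((M : ℤ)) (i + 1) * binomZ ((M : ℤ) - 2) (n - i - 1)) ≤
      ∑ i ∈ Finset.Icc k ((n : ℤ) - k),
        binomZ ((M : ℤ) - 1) i * binomZ ((M : ℤ) - 1) (n - i) := by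
  rcases lt_or_ge ((n : ℤ) - k) k with hemp | hkn
  · rw [Finset.Icc_eq_empty (by omega)]; simp
  rcases eq_or_lt_of_le (show 1 ≤ M from hM) with hM1 | hM2
  · -- M = 1 : left side is zero
    have : ∀ i ∈ Finset.Icc k ((n : ℤ) - k),
        binomZ ((M : ℤ)) (i + 1) * binomZ ((M : ℤ) - 2) (n - i - 1) = 0 := by
      intro i _
      rcases lt_or_ge ((n : ℤ) - i - 1) 0 with hni | hni
      · rw [binomZ_of_neg hni]; simp
      · rw [binomZ_of_gt (show (M : ℤ) - 2 < (n : ℤ) - i - 1 by omega)]; simp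
    rw [Finset.sum_eq_zero this]
    exact Nat.zero_le _
  · have hM' : 2 ≤ M := hM2
    set f : ℤ → ℕ := fun i => binomZ ((M : ℤ) - 1) i * binomZ ((M : ℤ) - 2) ((n : ℤ) - i) with hf
    have step : ∀ i : ℤ,
        binomZ ((M : ℤ) - 1) i * binomZ ((M : ℤ) - 1) ((n : ℤ) - i) + f (i + 1) =
          binomZ ((M : ℤ)) (i + 1) * binomZ ((M : ℤ) - 2) ((n : ℤ) - i - 1) + f i := by
      intro i
      simp only [hf]
      rw [binomZ_pascal (M : ℤ) (i + 1) (by omega),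
        binomZ_pascal ((M : ℤ) - 1) ((n : ℤ) - i) (by omega)]
      have e1 : (i : ℤ) + 1 - 1 = i := by ring
      have e2 : (M : ℤ) - 1 - 1 = (M : ℤ) - 2 := by ring
      have e3 : (n : ℤ) - i - 1 = (n : ℤ) - (i + 1) := by ring
      rw [e1, e2, e3]
      ring
    -- summed identity
    have hsum : (∑ i ∈ Finset.Icc k ((n : ℤ) - k),
          binomZ ((M : ℤ) - 1) i * binomZ ((M : ℤ) - 1) ((n : ℤ) - i)) +
        (∑ i ∈ Finset.Icc k ((n : ℤ) - k), f (i + 1)) =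
        (∑ i ∈ Finset.Icc k ((n : ℤ) - k),
          binomZ ((M : ℤ)) (i + 1) * binomZ ((M : ℤ) - 2) ((n : ℤ) - i - 1)) +
        (∑ i ∈ Finset.Icc k ((n : ℤ) - k), f i) := by
      rw [← Finset.sum_add_distrib, ← Finset.sum_add_distrib]
      exact Finset.sum_congr rfl fun i _ => step i
    have shift : (∑ i ∈ Finset.Icc k ((n : ℤ) - k), f (i + 1)) =
        ∑ i ∈ Finset.Icc (k + 1) ((n : ℤ) - k + 1), f i := by
      refine Finset.sum_nbij' (fun x => x + 1) (fun x => x - 1) ?_ ?_ ?_ ?_ ?_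
      · intro a ha; simp only [Finset.mem_Icc] at *; omega
      · intro a ha; simp only [Finset.mem_Icc] at *; omega
      · intro a ha; beta_reduce; omega
      · intro a ha; beta_reduce; omega
      · intro a ha; rfl
    have split1 : (∑ i ∈ Finset.Icc k ((n : ℤ) - k), f i) =
        f k + ∑ i ∈ Finset.Ioc k ((n : ℤ) - k), f i := by
      rw [Finset.Icc_eq_cons_Ioc hkn, Finset.sum_cons]
    have hIoc : Finset.Icc (k + 1) ((n : ℤ) - k + 1) =
        (Finset.Ioc k ((n : ℤ) - k)).cons ((n : ℤ) - k + 1) (by simp [Finset.mem_Ioc]) := by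
      ext x
      simp [Finset.mem_Icc, Finset.mem_Ioc, Finset.mem_cons]
      omega
    have split2 : (∑ i ∈ Finset.Icc (k + 1) ((n : ℤ) - k + 1), f i) =
        f ((n : ℤ) - k + 1) + ∑ i ∈ Finset.Ioc k ((n : ℤ) - k), f i := by
      rw [hIoc, Finset.sum_cons]
    have hfle : f ((n : ℤ) - k + 1) ≤ f k := by
      have := f_ineq M hM' n k hk
      simp only [hf]
      have e : (n : ℤ) - ((n : ℤ) - k + 1) = k - 1 := by ring
      have e' : (n : ℤ) - k + 1 = (n : ℤ) + 1 - k := by ring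
      rw [e, e']
      exact this
    omega
end

section
/- Let M be a positive integer and let α₀, α₁, …, α_M be a log-concave sequence of nonnegative reals. Define g(x) = Σ_{i=0}^{M} αᵢ · (M choose i) · (1-x)^i · x^{M-i}. Then ((M-1)/M) · g'(x)² ≥ g(x) · g''(x) for every x ∈ (0, 1). -/
open Real Set

namespace SLCAux

/-- Bernstein basis term. -/
noncomputable def T (M i : ℕ) (x : ℝ) : ℝ := (1 - x) ^ i * x ^ (M - i)

/-- First derivative of `T`. -/
noncomputable def D (M i : ℕ) (x : ℝ) : ℝ :=
  -(i : ℝ) * (1 - x) ^ (i - 1) * x ^ (M - i)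
    + ((M - i : ℕ) : ℝ) * (1 - x) ^ i * x ^ (M - i - 1)

/-- Second derivative of `T`. -/
noncomputable def DD (M i : ℕ) (x : ℝ) : ℝ :=
  (i : ℝ) * ((i - 1 : ℕ) : ℝ) * (1 - x) ^ (i - 1 - 1) * x ^ (M - i)
    - (i : ℝ) * ((M - i : ℕ) : ℝ) * (1 - x) ^ (i - 1) * x ^ (M - i - 1)
    - ((M - i : ℕ) : ℝ) * (i : ℝ) * (1 - x) ^ (i - 1) * x ^ (M - i - 1)
    + ((M - i : ℕ) : ℝ) * ((M - i - 1 : ℕ) : ℝ) * (1 - x) ^ i * x ^ (M - i - 1 - 1)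

noncomputable def W1 (M i : ℕ) (x : ℝ) : ℝ := -(i : ℝ) * x + ((M : ℝ) - i) * (1 - x)

noncomputable def W2 (M i : ℕ) (x : ℝ) : ℝ :=
  (i : ℝ) * ((i : ℝ) - 1) * x ^ 2 - 2 * (i : ℝ) * ((M : ℝ) - i) * ((1 - x) * x)
    + ((M : ℝ) - i) * ((M : ℝ) - i - 1) * (1 - x) ^ 2

noncomputable def hw (M i j : ℕ) : ℝ :=
  (M : ℝ) / 2 * ((i : ℝ) - j) ^ 2 + (i : ℝ) * j - (M : ℝ) / 2 * ((i : ℝ) + j)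

lemma hasDerivAt_T (M i : ℕ) (x : ℝ) : HasDerivAt (fun y => T M i y) (D M i x) x := by
  have h1 : HasDerivAt (fun y : ℝ => 1 - y) (-1) x := by
    simpa using (hasDerivAt_id x).const_sub 1
  have h2 : HasDerivAt (fun y : ℝ => (1 - y) ^ i)
      ((i : ℝ) * (1 - x) ^ (i - 1) * (-1)) x := h1.pow i
  have h3 : HasDerivAt (fun y : ℝ => y ^ (M - i))
      (((M - i : ℕ) : ℝ) * x ^ (M - i - 1)) x := hasDerivAt_pow (M - i) x
  have h4 := h2.fun_mul h3
  refine h4.congr_deriv ?_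
  · simp only [D]; ring

lemma hasDerivAt_D (M i : ℕ) (x : ℝ) : HasDerivAt (fun y => D M i y) (DD M i x) x := by
  have h1 : HasDerivAt (fun y : ℝ => 1 - y) (-1) x := by
    simpa using (hasDerivAt_id x).const_sub 1
  have p1 : HasDerivAt (fun y : ℝ => -(i : ℝ) * (1 - y) ^ (i - 1))
      (-(i : ℝ) * (((i - 1 : ℕ) : ℝ) * (1 - x) ^ (i - 1 - 1) * (-1))) x :=
    (h1.pow (i - 1)).const_mul (-(i : ℝ))
  have q1 := p1.fun_mul (hasDerivAt_pow (M - i) x)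
  have p2 : HasDerivAt (fun y : ℝ => ((M - i : ℕ) : ℝ) * (1 - y) ^ i)
      (((M - i : ℕ) : ℝ) * ((i : ℝ) * (1 - x) ^ (i - 1) * (-1))) x :=
    (h1.pow i).const_mul ((M - i : ℕ) : ℝ)
  have q2 := p2.fun_mul (hasDerivAt_pow (M - i - 1) x)
  have h5 := q1.fun_add q2
  refine h5.congr_deriv ?_
  · simp only [DD]; ring

lemma TT (M j : ℕ) (hj : j ≤ M) (x : ℝ) :
    ((1 - x) * x) ^ 2 * DD M j x = W2 M j x * T M j x := by
  obtain ⟨n, rfl⟩ : ∃ n, M = j + n := ⟨M - j, by omega⟩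
  simp only [DD, W2, T, Nat.add_sub_cancel_left]
  rcases j with _ | _ | j <;> rcases n with _ | _ | n <;>
    simp only [Nat.succ_sub_one, Nat.zero_sub, Nat.sub_self, Nat.sub_zero,
      Nat.add_sub_cancel] <;> push_cast <;> ring

lemma DT (M j : ℕ) (hj : j ≤ M) (x : ℝ) :
    ((1 - x) * x) * D M j x = W1 M j x * T M j x := by
  obtain ⟨n, rfl⟩ : ∃ n, M = j + n := ⟨M - j, by omega⟩
  simp only [D, W1, T, Nat.add_sub_cancel_left]
  rcases j with _ | j <;> rcases n with _ | n <;>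
    simp only [Nat.succ_sub_one, Nat.zero_sub, Nat.sub_self, Nat.sub_zero,
      Nat.add_sub_cancel] <;> push_cast <;> ring

lemma GEXP (M i j : ℕ) (hi : i ≤ M) (hj : j ≤ M) (x : ℝ) :
    ((M : ℝ) * (T M i x * DD M j x) - ((M : ℝ) - 1) * (D M i x * D M j x)) * ((1 - x) * x) ^ 2
      = ((M : ℝ) * W2 M j x - ((M : ℝ) - 1) * W1 M i x * W1 M j x) * (T M i x * T M j x) := by
  have t1 := TT M j hj x
  have d1 := DT M i hi x
  have d2 := DT M j hj x
  linear_combination (M : ℝ) * (T M i x) * t1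
    - ((M : ℝ) - 1) * ((1 - x) * x * (D M j x)) * d1
    - ((M : ℝ) - 1) * (W1 M i x * T M i x) * d2

/-- the symmetrized per-pair identity -/
lemma PP (M i j : ℕ) (hi : i ≤ M) (hj : j ≤ M) (b : ℕ → ℝ) (x : ℝ) :
    ((M : ℝ) * ((b i * T M i x) * (b j * DD M j x))
        - ((M : ℝ) - 1) * ((b i * D M i x) * (b j * D M j x))) * ((1 - x) * x) ^ 2
      + ((M : ℝ) * ((b j * T M j x) * (b i * DD M i x))
        - ((M : ℝ) - 1) * ((b j * D M j x) * (b i * D M i x))) * ((1 - x) * x) ^ 2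
      = 2 * (b i * b j * hw M i j * ((1 - x) ^ (i + j) * x ^ (2 * M - (i + j)))) := by
  rw [show 2 * M - (i + j) = (M - i) + (M - j) by omega, pow_add, pow_add]
  have e1 := GEXP M i j hi hj x
  have e2 := GEXP M j i hj hi x
  have hW : (M : ℝ) * (W2 M j x + W2 M i x)
      - 2 * ((M : ℝ) - 1) * (W1 M i x * W1 M j x) = 2 * hw M i j := by
    simp only [W1, W2, hw]; push_cast; ring
  simp only [T] at *
  linear_combination (b i * b j) * e1 + (b i * b j) * e2
    + (b i * b j * ((1 - x) ^ i * x ^ (M - i) * ((1 - x) ^ j * x ^ (M - j)))) * hW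

/-- monotonicity along an antidiagonal from log-concavity -/
lemma MONO (M k : ℕ) (α : ℕ → ℝ)
    (hlc : ∀ i j : ℕ, 1 ≤ i → i ≤ j → j + 1 ≤ M →
      α (i - 1) * α (j + 1) ≤ α i * α j) :
    ∀ n i, 2 * (i + n) ≤ k → k - i ≤ M → α i * α (k - i) ≤ α (i + n) * α (k - (i + n)) := by
  intro n
  induction n with
  | zero => intro i _ _; simp
  | succ n ih =>
    intro i hin hiM
    have hstep : α i * α (k - i) ≤ α (i + 1) * α (k - (i + 1)) := by
      have h := hlc (i + 1) (k - i - 1) (by omega) (by omega) (by omega)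
      have e1 : i + 1 - 1 = i := by omega
      have e2 : k - i - 1 + 1 = k - i := by omega
      have e3 : k - i - 1 = k - (i + 1) := by omega
      rw [e1, e2, e3] at h
      exact h
    have h2 := ih (i + 1) (by omega) (by omega)
    calc α i * α (k - i) ≤ α (i + 1) * α (k - (i + 1)) := hstep
      _ ≤ α (i + 1 + n) * α (k - (i + 1 + n)) := h2
      _ = α (i + (n + 1)) * α (k - (i + (n + 1))) := by rw [show i + 1 + n = i + (n + 1) by omega]

lemma CH1 (M m : ℕ) : Nat.choose M (m + 1) * (m + 1) = M * Nat.choose (M - 1) m := by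
  cases M with
  | zero => simp [Nat.choose_eq_zero_of_lt]
  | succ n =>
    simpa using (Nat.add_one_mul_choose_eq n m).symm

lemma CH2 (M m : ℕ) : Nat.choose M (m + 2) * ((m + 2) * (m + 1)) = M * (M - 1) * Nat.choose (M - 2) m := by
  match M with
  | 0 => simp [Nat.choose_eq_zero_of_lt]
  | 1 => simp [Nat.choose_eq_zero_of_lt]
  | (n + 2) =>
    have h1 : Nat.choose (n + 2) (m + 2) * (m + 2) = (n + 2) * Nat.choose (n + 1) (m + 1) := by
      have := CH1 (n + 2) (m + 1); simpa using this
    have h2 : Nat.choose (n + 1) (m + 1) * (m + 1) = (n + 1) * Nat.choose n m := by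
      have := CH1 (n + 1) m; simpa using this
    calc Nat.choose (n + 2) (m + 2) * ((m + 2) * (m + 1))
        = (Nat.choose (n + 2) (m + 2) * (m + 2)) * (m + 1) := by ring
      _ = (n + 2) * (Nat.choose (n + 1) (m + 1) * (m + 1)) := by rw [h1]; ring
      _ = (n + 2) * ((n + 1) * Nat.choose n m) := by rw [h2]
      _ = (n + 2) * ((n + 2) - 1) * Nat.choose ((n + 2) - 2) m := by simp; ring


lemma N1 (M k : ℕ) (hk2 : 2 ≤ k) :
    ∑ p ∈ (Finset.range (M+1) ×ˢ Finset.range (M+1)).filter (fun p => p.1 + p.2 = k),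
      Nat.choose M p.1 * (Nat.choose M p.2 * (p.2 * (p.2 - 1)))
    = M * (M - 1) * Nat.choose (M + (M - 2)) (k - 2) := by
  obtain ⟨l, rfl⟩ : ∃ l, k = l + 2 := ⟨k - 2, by omega⟩
  have hsub : (Finset.range (M+1) ×ˢ Finset.range (M+1)).filter (fun p => p.1 + p.2 = l + 2)
      ⊆ Finset.HasAntidiagonal.antidiagonal (l + 2) := by
    intro p hp
    simp only [Finset.mem_filter, Finset.mem_product, Finset.mem_range] at hp
    simp [Finset.mem_antidiagonal, hp.2]
  have hzero : ∀ p ∈ Finset.HasAntidiagonal.antidiagonal (l + 2),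
      p ∉ (Finset.range (M+1) ×ˢ Finset.range (M+1)).filter (fun p => p.1 + p.2 = l + 2) →
      Nat.choose M p.1 * (Nat.choose M p.2 * (p.2 * (p.2 - 1))) = 0 := by
    intro p hp hnp
    simp only [Finset.HasAntidiagonal.mem_antidiagonal] at hp
    simp only [Finset.mem_filter, Finset.mem_product, Finset.mem_range] at hnp
    have : M < p.1 ∨ M < p.2 := by omega
    rcases this with h | h <;> simp [Nat.choose_eq_zero_of_lt h]
  rw [Finset.sum_subset hsub hzero]
  rw [Finset.Nat.sum_antidiagonal_eq_sum_range_succ_mk]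
  rw [Finset.sum_range_succ, Finset.sum_range_succ]
  have e1 : l + 2 - (l + 1) = 1 := by omega
  have e2 : l + 2 - (l + 2) = 0 := by omega
  rw [e1, e2]
  norm_num
  have hcong : ∀ i ∈ Finset.range (l + 1),
      Nat.choose M i * (Nat.choose M (l + 2 - i) * ((l + 2 - i) * (l + 2 - i - 1)))
      = M * (M - 1) * (Nat.choose M i * Nat.choose (M - 2) (l - i)) := by
    intro i hi
    simp only [Finset.mem_range] at hi
    have e3 : l + 2 - i = (l - i) + 2 := by omega
    rw [e3, show (l - i) + 2 - 1 = (l - i) + 1 by omega, CH2]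
    ring
  rw [Finset.sum_congr rfl hcong, ← Finset.mul_sum]
  congr 1
  rw [Nat.add_choose_eq, Finset.Nat.sum_antidiagonal_eq_sum_range_succ_mk]

lemma N2 (M k : ℕ) (hk2 : 2 ≤ k) :
    ∑ p ∈ (Finset.range (M+1) ×ˢ Finset.range (M+1)).filter (fun p => p.1 + p.2 = k),
      (Nat.choose M p.1 * p.1) * (Nat.choose M p.2 * p.2)
    = M * M * Nat.choose ((M - 1) + (M - 1)) (k - 2) := by
  obtain ⟨l, rfl⟩ : ∃ l, k = l + 2 := ⟨k - 2, by omega⟩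
  have hsub : (Finset.range (M+1) ×ˢ Finset.range (M+1)).filter (fun p => p.1 + p.2 = l + 2)
      ⊆ Finset.HasAntidiagonal.antidiagonal (l + 2) := by
    intro p hp
    simp only [Finset.mem_filter, Finset.mem_product, Finset.mem_range] at hp
    simp [Finset.mem_antidiagonal, hp.2]
  have hzero : ∀ p ∈ Finset.HasAntidiagonal.antidiagonal (l + 2),
      p ∉ (Finset.range (M+1) ×ˢ Finset.range (M+1)).filter (fun p => p.1 + p.2 = l + 2) →
      (Nat.choose M p.1 * p.1) * (Nat.choose M p.2 * p.2) = 0 := by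
    intro p hp hnp
    simp only [Finset.HasAntidiagonal.mem_antidiagonal] at hp
    simp only [Finset.mem_filter, Finset.mem_product, Finset.mem_range] at hnp
    have : M < p.1 ∨ M < p.2 := by omega
    rcases this with h | h <;> simp [Nat.choose_eq_zero_of_lt h]
  rw [Finset.sum_subset hsub hzero]
  rw [Finset.Nat.sum_antidiagonal_eq_sum_range_succ_mk]
  rw [Finset.sum_range_succ']
  norm_num
  rw [Finset.sum_range_succ]
  have e1 : l + 2 - (l + 1 + 1) = 0 := by omega
  rw [e1]
  norm_num
  have hcong : ∀ i ∈ Finset.range (l + 1),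
      (Nat.choose M (i+1) * (i+1)) * (Nat.choose M (l + 2 - (i+1)) * (l + 2 - (i+1)))
      = M * M * (Nat.choose (M - 1) i * Nat.choose (M - 1) (l - i)) := by
    intro i hi
    simp only [Finset.mem_range] at hi
    have e3 : l + 2 - (i + 1) = (l - i) + 1 := by omega
    rw [e3, CH1, CH1]
    ring
  rw [Finset.sum_congr rfl hcong, ← Finset.mul_sum]
  congr 1
  rw [Nat.add_choose_eq, Finset.Nat.sum_antidiagonal_eq_sum_range_succ_mk]

lemma castmul (n : ℕ) : ((n * (n - 1) : ℕ) : ℝ) = (n : ℝ) ^ 2 - n := by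
  cases n with
  | zero => simp
  | succ m => push_cast [Nat.succ_sub_one]; ring

lemma ZS (M k : ℕ) (hM : 2 ≤ M) (hk : k ≤ 2 * M) :
    ∑ p ∈ (Finset.range (M+1) ×ˢ Finset.range (M+1)).filter (fun p => p.1 + p.2 = k),
      ((M.choose p.1 : ℝ) * (M.choose p.2 : ℝ)) * hw M p.1 p.2 = 0 := by
  set Ak := (Finset.range (M+1) ×ˢ Finset.range (M+1)).filter (fun p : ℕ × ℕ => p.1 + p.2 = k) with hAk
  have hswap : ∀ f : ℕ → ℕ → ℝ, ∑ p ∈ Ak, f p.1 p.2 = ∑ p ∈ Ak, f p.2 p.1 := by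
    intro f
    apply Finset.sum_equiv (Equiv.prodComm ℕ ℕ)
    · intro p
      simp only [hAk, Finset.mem_filter, Finset.mem_product, Finset.mem_range,
        Equiv.prodComm_apply, Prod.fst_swap, Prod.snd_swap]
      omega
    · intro p _
      rfl
  set S1 : ℝ := ∑ p ∈ Ak, ((M.choose p.1 : ℝ) * (M.choose p.2 : ℝ)) * ((p.2 * (p.2 - 1) : ℕ) : ℝ) with hS1def
  set S2 : ℝ := ∑ p ∈ Ak, ((M.choose p.1 : ℝ) * (M.choose p.2 : ℝ)) * ((p.1 * p.2 : ℕ) : ℝ) with hS2def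
  have hsw1 : ∑ p ∈ Ak, ((M.choose p.1 : ℝ) * (M.choose p.2 : ℝ)) * ((p.1 * (p.1 - 1) : ℕ) : ℝ) = S1 := by
    rw [hS1def]
    rw [hswap (fun a b => ((M.choose a : ℝ) * (M.choose b : ℝ)) * ((a * (a - 1) : ℕ) : ℝ))]
    exact Finset.sum_congr rfl fun p _ => by push_cast; ring
  have hkey2 : (2 : ℝ) * (∑ p ∈ Ak, ((M.choose p.1 : ℝ) * (M.choose p.2 : ℝ)) * hw M p.1 p.2)
      = 2 * ((M : ℝ) * S1 - ((M : ℝ) - 1) * S2) := by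
    rw [Finset.mul_sum]
    have hterm : ∀ p ∈ Ak, 2 * (((M.choose p.1 : ℝ) * (M.choose p.2 : ℝ)) * hw M p.1 p.2)
        = (M : ℝ) * (((M.choose p.1 : ℝ) * (M.choose p.2 : ℝ)) * ((p.1 * (p.1 - 1) : ℕ) : ℝ))
          + (M : ℝ) * (((M.choose p.1 : ℝ) * (M.choose p.2 : ℝ)) * ((p.2 * (p.2 - 1) : ℕ) : ℝ))
          - 2 * ((M : ℝ) - 1) * (((M.choose p.1 : ℝ) * (M.choose p.2 : ℝ)) * ((p.1 * p.2 : ℕ) : ℝ)) := by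
      intro p _
      rw [hw, castmul, castmul]
      push_cast
      ring
    rw [Finset.sum_congr rfl hterm]
    rw [Finset.sum_sub_distrib, Finset.sum_add_distrib, ← Finset.mul_sum, ← Finset.mul_sum,
      ← Finset.mul_sum, hsw1]
    rw [hS1def, hS2def]
    ring
  have hmain : (M : ℝ) * S1 - ((M : ℝ) - 1) * S2 = 0 := by
    have hS1cast : S1 = ((∑ p ∈ Ak, Nat.choose M p.1 * (Nat.choose M p.2 * (p.2 * (p.2 - 1)))) : ℕ) := by
      rw [hS1def]
      push_cast
      exact Finset.sum_congr rfl fun p _ => by ring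
    have hS2cast : S2 = ((∑ p ∈ Ak, (Nat.choose M p.1 * p.1) * (Nat.choose M p.2 * p.2)) : ℕ) := by
      rw [hS2def]
      push_cast
      exact Finset.sum_congr rfl fun p _ => by ring
    rcases le_or_gt 2 k with hk2 | hk2
    · rw [hS1cast, hS2cast, hAk, N1 M k hk2, N2 M k hk2]
      have : M + (M - 2) = (M - 1) + (M - 1) := by omega
      rw [this]
      have h1 : ((M - 1 : ℕ) : ℝ) = (M : ℝ) - 1 := by
        push_cast [Nat.cast_sub (by omega : 1 ≤ M)]; ring
      push_cast [h1]
      ring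
    · have hz1 : ∑ p ∈ Ak, Nat.choose M p.1 * (Nat.choose M p.2 * (p.2 * (p.2 - 1))) = 0 := by
        apply Finset.sum_eq_zero
        intro p hp
        simp only [hAk, Finset.mem_filter, Finset.mem_product, Finset.mem_range] at hp
        have : p.2 = 0 ∨ p.2 = 1 := by omega
        rcases this with h | h <;> simp [h]
      have hz2 : ∑ p ∈ Ak, (Nat.choose M p.1 * p.1) * (Nat.choose M p.2 * p.2) = 0 := by
        apply Finset.sum_eq_zero
        intro p hp
        simp only [hAk, Finset.mem_filter, Finset.mem_product, Finset.mem_range] at hp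
        have : p.1 = 0 ∨ p.2 = 0 := by omega
        rcases this with h | h <;> simp [h]
      rw [hS1cast, hS2cast, hz1, hz2]
      simp
  linarith

lemma CHEB (M k : ℕ) (hM : 2 ≤ M) (hk : k ≤ 2 * M) (α : ℕ → ℝ)
    (hnn : ∀ i ≤ M, 0 ≤ α i)
    (hlc : ∀ i j : ℕ, 1 ≤ i → i ≤ j → j + 1 ≤ M →
      α (i - 1) * α (j + 1) ≤ α i * α j) :
    ∑ p ∈ (Finset.range (M+1) ×ˢ Finset.range (M+1)).filter (fun p => p.1 + p.2 = k),
      (α p.1 * α p.2) * (((M.choose p.1 : ℝ) * (M.choose p.2 : ℝ)) * hw M p.1 p.2) ≤ 0 := by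
  set Ak := (Finset.range (M+1) ×ˢ Finset.range (M+1)).filter (fun p : ℕ × ℕ => p.1 + p.2 = k) with hAk
  have hex : ∃ d, k % 2 = d % 2 ∧ k * (2 * M - k) < (2 * M - 1) * d ^ 2 := by
    refine ⟨2 * M + k, by omega, ?_⟩
    set a := 2 * M * (2 * M) with ha
    have ha0 : 0 < a := by positivity
    calc k * (2 * M - k) ≤ a := by
          rw [ha]; exact Nat.mul_le_mul (by omega) (by omega)
      _ < 3 * a := by omega
      _ ≤ (2 * M - 1) * (2 * M + k) ^ 2 := by
          apply Nat.mul_le_mul (by omega)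
          rw [ha, pow_two]
          exact Nat.mul_le_mul (by omega) (by omega)
  set dc := Nat.find hex with hdc
  have hspec := Nat.find_spec hex
  set istar := (k - dc) / 2 with histar
  set jstar := (k + dc) / 2 with hjstar
  suffices hsuff : ∃ c : ℝ, ∀ p ∈ Ak,
      (α p.1 * α p.2) * (((M.choose p.1 : ℝ) * (M.choose p.2 : ℝ)) * hw M p.1 p.2)
        ≤ c * (((M.choose p.1 : ℝ) * (M.choose p.2 : ℝ)) * hw M p.1 p.2) by
    obtain ⟨c, hc⟩ := hsuff
    calc ∑ p ∈ Ak, (α p.1 * α p.2) * (((M.choose p.1 : ℝ) * (M.choose p.2 : ℝ)) * hw M p.1 p.2)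
        ≤ ∑ p ∈ Ak, c * (((M.choose p.1 : ℝ) * (M.choose p.2 : ℝ)) * hw M p.1 p.2) :=
          Finset.sum_le_sum hc
      _ = c * ∑ p ∈ Ak, ((M.choose p.1 : ℝ) * (M.choose p.2 : ℝ)) * hw M p.1 p.2 := by
          rw [Finset.mul_sum]
      _ = 0 := by rw [hAk, ZS M k hM hk]; ring
  -- pointwise construction
  have hpoint : ∀ (c : ℝ) (p : ℕ × ℕ), p ∈ Ak →
      (∀ i0 j0, i0 ≤ j0 → i0 + j0 = k → j0 ≤ M →
        (k * (2 * M - k) < (2 * M - 1) * (j0 - i0) ^ 2 → α i0 * α j0 ≤ c) ∧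
        (¬ k * (2 * M - k) < (2 * M - 1) * (j0 - i0) ^ 2 → c ≤ α i0 * α j0)) →
      (α p.1 * α p.2) * (((M.choose p.1 : ℝ) * (M.choose p.2 : ℝ)) * hw M p.1 p.2)
        ≤ c * (((M.choose p.1 : ℝ) * (M.choose p.2 : ℝ)) * hw M p.1 p.2) := by
    intro c p hp hcomp
    simp only [hAk, Finset.mem_filter, Finset.mem_product, Finset.mem_range] at hp
    obtain ⟨⟨hi, hj⟩, hk'⟩ := hp
    obtain ⟨i0, j0, hle, hsum, hj0, hγ, hhw⟩ :
        ∃ i0 j0, i0 ≤ j0 ∧ i0 + j0 = k ∧ j0 ≤ M ∧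
          α p.1 * α p.2 = α i0 * α j0 ∧
          ((M.choose p.1 : ℝ) * (M.choose p.2 : ℝ)) * hw M p.1 p.2
            = ((M.choose i0 : ℝ) * (M.choose j0 : ℝ)) * hw M i0 j0 := by
      rcases le_total p.1 p.2 with h | h
      · exact ⟨p.1, p.2, h, hk', by omega, rfl, rfl⟩
      · refine ⟨p.2, p.1, h, by omega, by omega, mul_comm _ _, ?_⟩
        simp only [hw]; push_cast; ring
    have hCCnn : (0 : ℝ) ≤ (M.choose i0 : ℝ) * (M.choose j0 : ℝ) := by positivity
    have hw4 : hw M i0 j0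
        = (((2 * M - 1) * (j0 - i0) ^ 2 : ℕ) : ℝ) / 4 - ((k * (2 * M - k) : ℕ) : ℝ) / 4 := by
      simp only [hw]
      have hk0 : (k : ℝ) = (i0 : ℝ) + (j0 : ℝ) := by exact_mod_cast hsum.symm
      push_cast [Nat.cast_sub (by omega : 1 ≤ 2 * M), Nat.cast_sub (by omega : k ≤ 2 * M),
        Nat.cast_sub hle]
      rw [hk0]
      ring
    rw [hγ, hhw]
    by_cases hsign : k * (2 * M - k) < (2 * M - 1) * (j0 - i0) ^ 2
    · have hwpos : 0 < hw M i0 j0 := by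
        rw [hw4]
        have := (Nat.cast_lt (α := ℝ)).mpr hsign
        linarith
      have hγle : α i0 * α j0 ≤ c := ((hcomp i0 j0 hle hsum hj0).1) hsign
      exact mul_le_mul_of_nonneg_right hγle (mul_nonneg hCCnn hwpos.le)
    · have hwle : hw M i0 j0 ≤ 0 := by
        rw [hw4]
        have := (Nat.cast_le (α := ℝ)).mpr (le_of_not_gt hsign)
        linarith
      have hγge : c ≤ α i0 * α j0 := ((hcomp i0 j0 hle hsum hj0).2) hsign
      exact mul_le_mul_of_nonpos_right hγge (mul_nonpos_iff.mpr (Or.inl ⟨hCCnn, hwle⟩))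
  by_cases hcase : dc ≤ k ∧ dc ≤ 2 * M - k
  · refine ⟨α istar * α jstar, fun p hp => hpoint _ p hp ?_⟩
    intro i0 j0 hle hsum hj0
    have hpar : k % 2 = (j0 - i0) % 2 := by omega
    constructor
    · intro hsign
      have hdc_le : dc ≤ j0 - i0 := Nat.find_min' hex ⟨hpar, hsign⟩
      have h1 := MONO M k α hlc (istar - i0) i0 (by omega) (by omega)
      rw [show i0 + (istar - i0) = istar by omega, show k - i0 = j0 by omega,
        show k - istar = jstar by omega] at h1
      exact h1
    · intro hsign
      have hd_lt : j0 - i0 < dc := by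
        by_contra hcon
        push_neg at hcon
        have hmono : (2 * M - 1) * dc ^ 2 ≤ (2 * M - 1) * (j0 - i0) ^ 2 :=
          Nat.mul_le_mul_left _ (Nat.pow_le_pow_left hcon 2)
        exact hsign (lt_of_lt_of_le hspec.2 hmono)
      have h1 := MONO M k α hlc (i0 - istar) istar (by omega) (by omega)
      rw [show istar + (i0 - istar) = i0 by omega, show k - istar = jstar by omega,
        show k - i0 = j0 by omega] at h1
      exact h1
  · refine ⟨0, fun p hp => hpoint _ p hp ?_⟩
    intro i0 j0 hle hsum hj0
    constructor
    · intro hsign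
      exfalso
      have hdc_le : dc ≤ j0 - i0 := Nat.find_min' hex ⟨by omega, hsign⟩
      omega
    · intro _
      exact mul_nonneg (hnn i0 (by omega)) (hnn j0 hj0)

end SLCAux

theorem strengthened_log_concavity_discrete
    (M : ℕ) (hM : 0 < M) (α : ℕ → ℝ)
    (hα_nonneg : ∀ i ≤ M, 0 ≤ α i)
    (hα_logconcave : ∀ i j : ℕ, 1 ≤ i → i ≤ j → j + 1 ≤ M →
      α (i - 1) * α (j + 1) ≤ α i * α j)
    (g : ℝ → ℝ)
    (hg : g = fun x : ℝ => ∑ i ∈ Finset.range (M + 1),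
      α i * (M.choose i : ℝ) * (1 - x) ^ i * x ^ (M - i)) :
    ∀ x ∈ Set.Ioo (0 : ℝ) 1,
      g x * deriv (deriv g) x ≤ ((M : ℝ) - 1) / M * (deriv g x) ^ 2 := by
  subst hg
  intro x hx
  obtain ⟨hx0, hx1⟩ := hx
  have hgfun : (fun x : ℝ => ∑ i ∈ Finset.range (M + 1),
        α i * (M.choose i : ℝ) * (1 - x) ^ i * x ^ (M - i))
      = (fun x : ℝ => ∑ i ∈ Finset.range (M + 1),
        (α i * (M.choose i : ℝ)) * SLCAux.T M i x) := by
    funext y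
    exact Finset.sum_congr rfl fun i _ => by simp only [SLCAux.T]; ring
  rw [hgfun]
  have hd1 : deriv (fun x : ℝ => ∑ i ∈ Finset.range (M + 1),
        (α i * (M.choose i : ℝ)) * SLCAux.T M i x)
      = fun x : ℝ => ∑ i ∈ Finset.range (M + 1),
        (α i * (M.choose i : ℝ)) * SLCAux.D M i x := by
    funext y
    exact (HasDerivAt.fun_sum fun i _ => (SLCAux.hasDerivAt_T M i y).const_mul _).deriv
  rw [hd1]
  have hd2 : deriv (fun x : ℝ => ∑ i ∈ Finset.range (M + 1),
        (α i * (M.choose i : ℝ)) * SLCAux.D M i x) x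
      = ∑ i ∈ Finset.range (M + 1), (α i * (M.choose i : ℝ)) * SLCAux.DD M i x :=
    (HasDerivAt.fun_sum fun i _ => (SLCAux.hasDerivAt_D M i x).const_mul _).deriv
  rw [hd2]
  rcases (show M = 1 ∨ 2 ≤ M by omega) with rfl | hM2
  · norm_num [SLCAux.DD, Finset.sum_range_succ]
  · have hMr : (0 : ℝ) < M := by exact_mod_cast hM
    rw [div_mul_eq_mul_div, le_div_iff₀ hMr]
    set b : ℕ → ℝ := fun i => α i * (M.choose i : ℝ) with hb
    set r := Finset.range (M + 1) with hr
    -- doubling helper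
    have hdouble : ∀ F R : ℕ → ℕ → ℝ, (∀ i ∈ r, ∀ j ∈ r, F i j + F j i = 2 * R i j) →
        (∑ i ∈ r, ∑ j ∈ r, F i j) = ∑ i ∈ r, ∑ j ∈ r, R i j := by
      intro F R h
      have h1 : (∑ i ∈ r, ∑ j ∈ r, F i j) = ∑ i ∈ r, ∑ j ∈ r, F j i := Finset.sum_comm
      have h2 : (∑ i ∈ r, ∑ j ∈ r, (F i j + F j i)) = ∑ i ∈ r, ∑ j ∈ r, (2 * R i j) :=
        Finset.sum_congr rfl fun i hi => Finset.sum_congr rfl fun j hj => h i hi j hj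
      have h3 : (∑ i ∈ r, ∑ j ∈ r, (F i j + F j i))
          = (∑ i ∈ r, ∑ j ∈ r, F i j) + ∑ i ∈ r, ∑ j ∈ r, F j i := by
        simp [Finset.sum_add_distrib]
      have h4 : (∑ i ∈ r, ∑ j ∈ r, (2 * R i j)) = 2 * ∑ i ∈ r, ∑ j ∈ r, R i j := by
        simp [Finset.mul_sum]
      rw [h3, ← h1] at h2
      rw [h4] at h2
      linarith
    have hEc : ((M : ℝ) * ((∑ i ∈ r, b i * SLCAux.T M i x) * (∑ i ∈ r, b i * SLCAux.DD M i x))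
          - ((M : ℝ) - 1) * (∑ i ∈ r, b i * SLCAux.D M i x) ^ 2) * ((1 - x) * x) ^ 2
        = ∑ i ∈ r, ∑ j ∈ r,
            b i * b j * SLCAux.hw M i j * ((1 - x) ^ (i + j) * x ^ (2 * M - (i + j))) := by
      have hexp : ((M : ℝ) * ((∑ i ∈ r, b i * SLCAux.T M i x) * (∑ i ∈ r, b i * SLCAux.DD M i x))
            - ((M : ℝ) - 1) * (∑ i ∈ r, b i * SLCAux.D M i x) ^ 2) * ((1 - x) * x) ^ 2
          = ∑ i ∈ r, ∑ j ∈ r,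
              ((M : ℝ) * ((b i * SLCAux.T M i x) * (b j * SLCAux.DD M j x))
                - ((M : ℝ) - 1) * ((b i * SLCAux.D M i x) * (b j * SLCAux.D M j x)))
                * ((1 - x) * x) ^ 2 := by
        rw [Finset.sum_mul_sum, sq, Finset.sum_mul_sum]
        simp only [Finset.mul_sum]
        simp only [← Finset.sum_sub_distrib]
        simp only [Finset.sum_mul]
      rw [hexp]
      exact hdouble _ _ fun i hi j hj =>
        SLCAux.PP M i j (by simp only [hr, Finset.mem_range] at hi; omega)
          (by simp only [hr, Finset.mem_range] at hj; omega) b x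
    have hS : (∑ i ∈ r, ∑ j ∈ r,
          b i * b j * SLCAux.hw M i j * ((1 - x) ^ (i + j) * x ^ (2 * M - (i + j)))) ≤ 0 := by
      rw [← Finset.sum_product']
      have hmaps : ∀ p ∈ r ×ˢ r, p.1 + p.2 ∈ Finset.range (2 * M + 1) := by
        intro p hp
        simp only [hr, Finset.mem_product, Finset.mem_range] at hp ⊢
        omega
      rw [← Finset.sum_fiberwise_of_maps_to hmaps]
      apply Finset.sum_nonpos
      intro k hk
      have hk2M : k ≤ 2 * M := by simp only [Finset.mem_range] at hk; omega
      have hcong : ∀ p ∈ (r ×ˢ r).filter (fun p : ℕ × ℕ => p.1 + p.2 = k),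
          b p.1 * b p.2 * SLCAux.hw M p.1 p.2 * ((1 - x) ^ (p.1 + p.2) * x ^ (2 * M - (p.1 + p.2)))
          = ((α p.1 * α p.2) * (((M.choose p.1 : ℝ) * (M.choose p.2 : ℝ)) * SLCAux.hw M p.1 p.2))
            * ((1 - x) ^ k * x ^ (2 * M - k)) := by
        intro p hp
        have hpk : p.1 + p.2 = k := (Finset.mem_filter.1 hp).2
        rw [hpk, hb]
        ring
      rw [Finset.sum_congr rfl hcong, ← Finset.sum_mul]
      apply mul_nonpos_of_nonpos_of_nonneg
      · exact SLCAux.CHEB M k hM2 hk2M α hα_nonneg hα_logconcave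
      · exact mul_nonneg (pow_nonneg (by linarith) _) (pow_nonneg hx0.le _)
    have hcpos : (0 : ℝ) < ((1 - x) * x) ^ 2 :=
      pow_pos (mul_pos (by linarith) hx0) 2
    have hE : (M : ℝ) * ((∑ i ∈ r, b i * SLCAux.T M i x) * (∑ i ∈ r, b i * SLCAux.DD M i x))
        - ((M : ℝ) - 1) * (∑ i ∈ r, b i * SLCAux.D M i x) ^ 2 ≤ 0 := by
      by_contra hcon
      push_neg at hcon
      have hpos := mul_pos hcon hcpos
      rw [hEc] at hpos
      linarith
    linarith
end

section
/- Let M > 1 be real and let α be a nonnegative, continuous log-concave function on (0, M), extended by zero outside (0, M). Then for every real n with -2 < n < 2M - 2, ∫ α(s)·α(n-s)·C(M-1, s)·C(M-1, n-s) ds ≥ ∫ α(s)·α(n-s)·C(M, s)·C(M-2, n-s) ds, where both integrals range over all s with 0 ≤ s ≤ M and 0 ≤ n - s ≤ M. -/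
open Real MeasureTheory Set

/-- The symmetric positive kernel `1/(Γ(s+1)Γ(M-s+1)Γ(n-s+1)Γ(M-n+s+1))`. -/
noncomputable def Kk (M n s : ℝ) : ℝ :=
  (Real.Gamma (s+1) * Real.Gamma (M-s+1) * Real.Gamma (n-s+1) * Real.Gamma (M-n+s+1))⁻¹

/-- The quadratic weight. -/
noncomputable def wf (M n s : ℝ) : ℝ := (M-n+s)*(M*n-(2*M-1)*s)

/-- The symmetrized quadratic weight. -/
noncomputable def psif (M n s : ℝ) : ℝ := n*(2*M-n)/4 - (2*M-1)*(s-n/2)^2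

/-- The telescoping antiderivative-like quantity (pole-free form of
`C(M-1,s)·C(M-2,n-1-s)` up to a positive constant). -/
noncomputable def Dt (M n s : ℝ) : ℝ :=
  ((s+1)*(M-n+s+1)*((M-s)*((n-s)*(M-n+s)))) /
    (Real.Gamma (s+2) * Real.Gamma (M-s+1) * Real.Gamma (n-s+1) * Real.Gamma (M-n+s+2))

lemma contGammaAt {x : ℝ} (hx : 0 < x) : ContinuousAt Real.Gamma x := by
  refine (Real.differentiableAt_Gamma fun m => ?_).continuousAt
  have : (0:ℝ) ≤ m := Nat.cast_nonneg m
  intro h; rw [h] at hx; linarith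

lemma contOnGammaComp {f : ℝ → ℝ} {S : Set ℝ} (hf : Continuous f)
    (h : ∀ x ∈ S, 0 < f x) : ContinuousOn (fun x => Real.Gamma (f x)) S :=
  fun x hx => ((contGammaAt (h x hx)).comp hf.continuousAt).continuousWithinAt

/-- The key telescoping identity. -/
lemma key_telescope (M n s : ℝ) (h1 : 0 < s+1) (h2 : 0 < M-s+1) (h3 : 0 < n-s+1)
    (h4 : 0 < M-n+s+1) :
    Kk M n s * wf M n s = Dt M n s - Dt M n (s-1) := by
  have g1 := Real.Gamma_pos_of_pos h1
  have g2 := Real.Gamma_pos_of_pos h2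
  have g3 := Real.Gamma_pos_of_pos h3
  have g4 := Real.Gamma_pos_of_pos h4
  have e1 : Real.Gamma (s+2) = (s+1) * Real.Gamma (s+1) := by
    rw [show s+2 = (s+1)+1 by ring, Real.Gamma_add_one h1.ne']
  have e4 : Real.Gamma (M-n+s+2) = (M-n+s+1) * Real.Gamma (M-n+s+1) := by
    rw [show M-n+s+2 = (M-n+s+1)+1 by ring, Real.Gamma_add_one h4.ne']
  unfold Kk wf Dt
  rw [show s-1+2 = s+1 by ring]
  rw [show M-(s-1)+1 = (M-s+1)+1 by ring, Real.Gamma_add_one h2.ne']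
  rw [show n-(s-1)+1 = (n-s+1)+1 by ring, Real.Gamma_add_one h3.ne']
  rw [show M-n+(s-1)+2 = M-n+s+1 by ring]
  rw [e1, e4]
  field_simp
  ring

/-- The key reflection inequality. -/
lemma key_reflect (M n s : ℝ) (h0 : 0 ≤ s) (h1 : s ≤ n) (h2 : s ≤ M)
    (h3 : 0 ≤ 2*s-n+1) (h4 : 0 < M-n+s+1) :
    Dt M n (n-1-s) ≤ Dt M n s := by
  have p1 : (0:ℝ) < s+2 := by linarith
  have p2 : (0:ℝ) < M-s+1 := by linarith
  have p3 : (0:ℝ) < n-s+1 := by linarith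
  have p4 : (0:ℝ) < M-n+s+2 := by linarith
  have g1 := Real.Gamma_pos_of_pos p1
  have g2 := Real.Gamma_pos_of_pos p2
  have g3 := Real.Gamma_pos_of_pos p3
  have g4 := Real.Gamma_pos_of_pos p4
  unfold Dt
  rw [show n-1-s+2 = n-s+1 by ring, show M-(n-1-s)+1 = M-n+s+2 by ring,
    show n-(n-1-s)+1 = s+2 by ring, show M-n+(n-1-s)+2 = M-s+1 by ring]
  rw [show Real.Gamma (n-s+1) * Real.Gamma (M-n+s+2) * Real.Gamma (s+2) * Real.Gamma (M-s+1)
      = Real.Gamma (s+2) * Real.Gamma (M-s+1) * Real.Gamma (n-s+1) * Real.Gamma (M-n+s+2) by ring]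
  rw [div_le_div_iff_of_pos_right (by positivity)]
  nlinarith [mul_nonneg (mul_nonneg (mul_nonneg (mul_nonneg (by linarith : (0:ℝ) ≤ s+1)
    (by linarith : (0:ℝ) ≤ M-s)) (by linarith : (0:ℝ) ≤ n-s)) h4.le) h3]

lemma genBinom_sub_one (M t : ℝ) (hM : 1 < M) (h0 : 0 ≤ t) (h1 : t ≤ M) :
    genBinom (M-1) t = Real.Gamma M * (M-t) / (Real.Gamma (t+1) * Real.Gamma (M-t+1)) := by
  unfold genBinom
  rw [show M-1+1 = M by ring, show M-1-t+1 = M-t by ring]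
  rcases eq_or_lt_of_le h1 with rfl | hlt
  · simp
  · have h2 : M - t ≠ 0 := by intro h; linarith
    rw [show M-t+1 = (M-t)+1 by ring, Real.Gamma_add_one h2]
    have gt1 : 0 < Real.Gamma (t+1) := Real.Gamma_pos_of_pos (by linarith)
    have gt2 : 0 < Real.Gamma (M-t) := Real.Gamma_pos_of_pos (by linarith)
    field_simp

lemma genBinom_sub_two (M t : ℝ) (hM : 1 < M) (h0 : 0 ≤ t) (h1 : t ≤ M) :
    genBinom (M-2) t
      = Real.Gamma (M-1) * ((M-1-t)*(M-t)) / (Real.Gamma (t+1) * Real.Gamma (M-t+1)) := by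
  unfold genBinom
  rw [show M-2+1 = M-1 by ring, show M-2-t+1 = M-1-t by ring]
  by_cases hA : M-1-t = 0
  · rw [hA, Real.Gamma_zero]; simp
  by_cases hB : M - t = 0
  · rw [show M-1-t = -1 by linarith]
    have hneg : Real.Gamma (-1 : ℝ) = 0 := by
      have := Real.Gamma_neg_nat_eq_zero 1; norm_num at this; exact this
    rw [hneg, show M - t = 0 from hB]; simp
  · have hne : Real.Gamma (M-1-t) ≠ 0 := by
      apply Real.Gamma_ne_zero
      intro m
      match m with
      | 0 => simpa using hA
      | 1 => push_cast; intro h; exact hB (by linarith)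
      | (k+2) => push_cast; intro h; have : (0:ℝ) ≤ k := Nat.cast_nonneg k; linarith
    have e1 : Real.Gamma (M-t+1) = (M-t) * ((M-1-t) * Real.Gamma (M-1-t)) := by
      rw [show M-t+1 = (M-t)+1 by ring, Real.Gamma_add_one hB]
      rw [show Real.Gamma (M-t) = (M-1-t) * Real.Gamma (M-1-t) from by
        rw [show M-t = (M-1-t)+1 by ring, Real.Gamma_add_one hA]]
    rw [e1]
    have gt1 : Real.Gamma (t+1) ≠ 0 := (Real.Gamma_pos_of_pos (by linarith)).ne'
    field_simp

set_option maxHeartbeats 1000000 in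
theorem mixture_integral_ineq_one
    (M : ℝ) (hM : 1 < M) (α : ℝ → ℝ)
    (hα_nonneg : ∀ s, 0 ≤ α s)
    (hα_cont : ContinuousOn α (Set.Ioo (0 : ℝ) M))
    (hα_logconcave : IsLogConcaveOn (Set.Ioo (0 : ℝ) M) α)
    (hα_zero : ∀ s, s ∉ Set.Ioo (0 : ℝ) M → α s = 0)
    (n : ℝ) (hn₁ : -2 < n) (hn₂ : n < 2 * M - 2) :
    (∫ s in {s : ℝ | 0 ≤ s ∧ s ≤ M ∧ 0 ≤ n - s ∧ n - s ≤ M},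
        α s * α (n - s) * genBinom M s * genBinom (M - 2) (n - s)) ≤
      ∫ s in {s : ℝ | 0 ≤ s ∧ s ≤ M ∧ 0 ≤ n - s ∧ n - s ≤ M},
        α s * α (n - s) * genBinom (M - 1) s * genBinom (M - 1) (n - s) := by
  have hM0 : (0:ℝ) < M := by linarith
  set L : ℝ := max 0 (n - M) with hLdef
  set H : ℝ := min n M with hHdef
  have hset : {s : ℝ | 0 ≤ s ∧ s ≤ M ∧ 0 ≤ n - s ∧ n - s ≤ M} = Icc L H := by
    ext x
    simp only [mem_setOf_eq, mem_Icc, hLdef, hHdef, max_le_iff, le_min_iff]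
    constructor
    · rintro ⟨a, b, c, d⟩; exact ⟨⟨a, by linarith⟩, ⟨by linarith, b⟩⟩
    · rintro ⟨⟨a, b⟩, c, d⟩; exact ⟨a, d, by linarith, by linarith⟩
  rw [hset]
  by_cases hn0 : n ≤ 0
  · have hHL : H - L ≤ 0 := by
      have h1 : H ≤ 0 := le_trans (min_le_left n M) hn0
      have h2 : (0:ℝ) ≤ L := le_max_left 0 _
      linarith
    have hz : volume.restrict (Icc L H) = 0 := by
      rw [Measure.restrict_eq_zero, Real.volume_Icc]
      exact ENNReal.ofReal_eq_zero.2 hHL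
    rw [hz]; simp
  push_neg at hn0
  -- basic geometry of the box
  have hLH : L + H = n := by
    rcases le_total n M with h | h
    · rw [hLdef, hHdef, max_eq_left (by linarith : n - M ≤ 0), min_eq_left h]; ring
    · rw [hLdef, hHdef, max_eq_right (by linarith : (0:ℝ) ≤ n - M), min_eq_right h]; ring
  have hL0 : (0:ℝ) ≤ L := le_max_left 0 _
  have hH0 : (0:ℝ) < H := lt_min hn0 hM0
  have hHM : H ≤ M := min_le_right n M
  have hHn : H ≤ n := min_le_left n M
  have hLnM : n - M ≤ L := le_max_right 0 _
  have hLltH : L < H := by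
    rcases le_total n M with h | h
    · rw [hLdef, max_eq_left (by linarith : n - M ≤ 0)]; exact hH0
    · rw [hLdef, hHdef, max_eq_right (by linarith : (0:ℝ) ≤ n - M), min_eq_right h]; linarith
  have hbox : ∀ s ∈ Icc L H, 0 ≤ s ∧ s ≤ M ∧ s ≤ n ∧ n - M ≤ s := fun s hs =>
    ⟨le_trans hL0 hs.1, le_trans hs.2 hHM, le_trans hs.2 hHn, le_trans hLnM hs.1⟩
  -- measurability of α
  have hαind : α = (Ioo (0:ℝ) M).indicator α := by
    ext x
    by_cases hx : x ∈ Ioo (0:ℝ) M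
    · rw [indicator_of_mem hx]
    · rw [indicator_of_notMem hx, hα_zero x hx]
  have hαae : AEMeasurable α (volume : Measure ℝ) := by
    rw [hαind]
    exact (aemeasurable_indicator_iff measurableSet_Ioo).2
      (hα_cont.aemeasurable measurableSet_Ioo)
  have hmp : MeasurePreserving (fun x : ℝ => n - x) volume volume := by
    have h1 := (measurePreserving_add_left (volume : Measure ℝ) n).comp
      (Measure.measurePreserving_neg (volume : Measure ℝ))
    simpa [Function.comp_def, sub_eq_add_neg] using h1
  have hαrae : AEMeasurable (fun s => α (n - s)) (volume : Measure ℝ) :=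
    hαae.comp_quasiMeasurePreserving hmp.quasiMeasurePreserving
  -- boundedness of α
  have hαbdd : ∃ C : ℝ, 0 ≤ C ∧ ∀ x, α x ≤ C := by
    by_cases hz : ∀ x, α x = 0
    · exact ⟨0, le_refl _, fun x => (hz x).le⟩
    · push_neg at hz
      obtain ⟨c, hc⟩ := hz
      have hcIoo : c ∈ Ioo (0:ℝ) M := by
        by_contra h; exact hc (hα_zero c h)
      have hαc : 0 < α c := lt_of_le_of_ne (hα_nonneg c) (Ne.symm hc)
      obtain ⟨hc0, hcM⟩ := hcIoo
      have hJs : Icc (c/2) ((c+M)/2) ⊆ Ioo (0:ℝ) M := fun x hx =>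
        ⟨lt_of_lt_of_le (by linarith) hx.1, lt_of_le_of_lt hx.2 (by linarith)⟩
      obtain ⟨z, hzJ, hzmax⟩ := isCompact_Icc.exists_isMaxOn
        (⟨c, by constructor <;> linarith⟩ : (Icc (c/2) ((c+M)/2)).Nonempty)
        (hα_cont.mono hJs)
      have hCnn : 0 ≤ α z * α z / α c :=
        div_nonneg (mul_nonneg (hα_nonneg z) (hα_nonneg z)) hαc.le
      refine ⟨α z * α z / α c, hCnn, fun x => ?_⟩
      by_cases hx : x ∈ Ioo (0:ℝ) M
      · have hmid : (1/2 : ℝ) * c + (1/2 : ℝ) * x ∈ Icc (c/2) ((c+M)/2) :=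
          ⟨by nlinarith [hx.1], by nlinarith [hx.2]⟩
        have hlc := hα_logconcave c ⟨hc0, hcM⟩ x hx (1/2) (by norm_num) (by norm_num)
        rw [show (1 : ℝ) - 1/2 = 1/2 by norm_num] at hlc
        have hmax : α ((1/2 : ℝ) * c + (1/2 : ℝ) * x) ≤ α z := hzmax hmid
        have hr : ∀ a : ℝ, 0 ≤ a → (a ^ ((1:ℝ)/2)) ^ 2 = a := fun a ha => by
          rw [← Real.rpow_natCast (a ^ ((1:ℝ)/2)) 2, ← Real.rpow_mul ha]
          norm_num
        have h2 : α c * α x ≤ α z * α z := by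
          calc α c * α x = (α c ^ ((1:ℝ)/2) * α x ^ ((1:ℝ)/2))^2 := by
                rw [mul_pow, hr _ (hα_nonneg c), hr _ (hα_nonneg x)]
            _ ≤ (α z)^2 := by
                apply pow_le_pow_left₀
                  (mul_nonneg (Real.rpow_nonneg (hα_nonneg c) _) (Real.rpow_nonneg (hα_nonneg x) _))
                  (le_trans hlc hmax)
            _ = α z * α z := by ring
        exact (le_div_iff₀ hαc).2 (by nlinarith [h2])
      · rw [hα_zero x hx]; exact hCnn
  obtain ⟨Cα, hCα0, hCα⟩ := hαbdd
  have hCα' : ∀ x, |α x| ≤ Cα := fun x => by rw [abs_of_nonneg (hα_nonneg x)]; exact hCα x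
  -- master integrability lemma
  have hintMaster : ∀ f : ℝ → ℝ, ContinuousOn f (Icc L H) →
      IntegrableOn (fun s => α s * α (n - s) * f s) (Icc L H) volume := by
    intro f hf
    obtain ⟨Cf, hCf⟩ := isCompact_Icc.exists_bound_of_continuousOn hf
    have hCf0 : 0 ≤ Cf := le_trans (norm_nonneg _) (hCf L (left_mem_Icc.2 hLltH.le))
    refine Integrable.mono' (g := fun _ => Cα * Cα * Cf)
      (integrableOn_const measure_Icc_lt_top.ne) ?_ ?_
    · exact ((hαae.restrict.mul hαrae.restrict).mul
        (hf.aemeasurable measurableSet_Icc)).aestronglyMeasurable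
    · filter_upwards [ae_restrict_mem measurableSet_Icc] with x hx
      have h3 := hCf x hx
      rw [Real.norm_eq_abs] at h3 ⊢
      rw [abs_mul, abs_mul]
      exact mul_le_mul (mul_le_mul (hCα' x) (hCα' (n-x)) (abs_nonneg _) hCα0) h3
        (abs_nonneg _) (by positivity)
  -- positivity and continuity of the kernel
  have hKargs : ∀ s ∈ Icc L H, 0 < s+1 ∧ 0 < M-s+1 ∧ 0 < n-s+1 ∧ 0 < M-n+s+1 := by
    intro s hs
    obtain ⟨a, b, c, d⟩ := hbox s hs
    exact ⟨by linarith, by linarith, by linarith, by linarith⟩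
  have hcontK : ContinuousOn (Kk M n) (Icc L H) := by
    unfold Kk
    refine ContinuousOn.inv₀ ?_ ?_
    · exact (((contOnGammaComp (by fun_prop) fun s hs => (hKargs s hs).1).mul
        (contOnGammaComp (by fun_prop) fun s hs => (hKargs s hs).2.1)).mul
        (contOnGammaComp (by fun_prop) fun s hs => (hKargs s hs).2.2.1)).mul
        (contOnGammaComp (by fun_prop) fun s hs => (hKargs s hs).2.2.2)
    · intro s hs
      obtain ⟨a, b, c, d⟩ := hKargs s hs
      have := Real.Gamma_pos_of_pos a; have := Real.Gamma_pos_of_pos b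
      have := Real.Gamma_pos_of_pos c; have := Real.Gamma_pos_of_pos d
      positivity
  have hKpos : ∀ s ∈ Icc L H, 0 < Kk M n s := by
    intro s hs
    obtain ⟨a, b, c, d⟩ := hKargs s hs
    unfold Kk
    have := Real.Gamma_pos_of_pos a; have := Real.Gamma_pos_of_pos b
    have := Real.Gamma_pos_of_pos c; have := Real.Gamma_pos_of_pos d
    positivity
  -- reflection invariance of the box integral
  have hrefl : ∀ f : ℝ → ℝ, (∫ s in Icc L H, f (n - s)) = ∫ s in Icc L H, f s := by
    intro f
    rw [integral_Icc_eq_integral_Ioc, integral_Icc_eq_integral_Ioc,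
      ← intervalIntegral.integral_of_le hLltH.le, ← intervalIntegral.integral_of_le hLltH.le,
      intervalIntegral.integral_comp_sub_left f n,
      show n - H = L by linarith, show n - L = H by linarith]
  have hKsym : ∀ s, Kk M n (n - s) = Kk M n s := by
    intro s
    unfold Kk
    rw [show n-(n-s)+1 = s+1 by ring, show M-(n-s)+1 = M-n+s+1 by ring,
      show M-n+(n-s)+1 = M-s+1 by ring]
    ring_nf
  -- rewrite the two integrands in pole-free form
  have hEq1 : EqOn (fun s => α s * α (n - s) * genBinom M s * genBinom (M - 2) (n - s))
      (fun s => α s * α (n - s) * (Kk M n s *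
        (Real.Gamma (M+1) * Real.Gamma (M-1) * ((M-1-(n-s))*(M-(n-s)))))) (Icc L H) := by
    intro s hs
    obtain ⟨a, b, c, d⟩ := hbox s hs
    obtain ⟨p1, p2, p3, p4⟩ := hKargs s hs
    have q1 := (Real.Gamma_pos_of_pos p1).ne'
    have q2 := (Real.Gamma_pos_of_pos p2).ne'
    have q3 := (Real.Gamma_pos_of_pos p3).ne'
    have q4 := (Real.Gamma_pos_of_pos p4).ne'
    dsimp only
    rw [genBinom_sub_two M (n-s) hM (by linarith) (by linarith)]
    unfold genBinom Kk
    rw [show M-(n-s)+1 = M-n+s+1 by ring]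
    field_simp
  have hEq2 : EqOn (fun s => α s * α (n - s) * genBinom (M-1) s * genBinom (M-1) (n - s))
      (fun s => α s * α (n - s) * (Kk M n s *
        (Real.Gamma M * Real.Gamma M * ((M-s)*(M-(n-s)))))) (Icc L H) := by
    intro s hs
    obtain ⟨a, b, c, d⟩ := hbox s hs
    obtain ⟨p1, p2, p3, p4⟩ := hKargs s hs
    have q1 := (Real.Gamma_pos_of_pos p1).ne'
    have q2 := (Real.Gamma_pos_of_pos p2).ne'
    have q3 := (Real.Gamma_pos_of_pos p3).ne'
    have q4 := (Real.Gamma_pos_of_pos p4).ne'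
    dsimp only
    rw [genBinom_sub_one M s hM a b, genBinom_sub_one M (n-s) hM (by linarith) (by linarith)]
    unfold Kk
    rw [show M-(n-s)+1 = M-n+s+1 by ring]
    field_simp
  rw [setIntegral_congr_fun measurableSet_Icc hEq1, setIntegral_congr_fun measurableSet_Icc hEq2]
  -- the difference of weights
  have hM1 : M - 1 ≠ 0 := sub_ne_zero.2 hM.ne'
  have hG1 : Real.Gamma (M+1) = M * Real.Gamma M := Real.Gamma_add_one (by linarith)
  have hG2 : Real.Gamma M = (M-1) * Real.Gamma (M-1) := by
    have h := Real.Gamma_add_one hM1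
    rw [show M-1+1 = M by ring] at h
    exact h
  have hΓM1pos : 0 < Real.Gamma (M-1) := Real.Gamma_pos_of_pos (by linarith)
  have hBA : ∀ s : ℝ, Real.Gamma M * Real.Gamma M * ((M-s)*(M-(n-s)))
      - Real.Gamma (M+1) * Real.Gamma (M-1) * ((M-1-(n-s))*(M-(n-s)))
      = (Real.Gamma M ^ 2 / (M-1)) * wf M n s := by
    intro s
    rw [hG1, hG2]
    unfold wf
    field_simp
    ring
  have hcΓpos : 0 < Real.Gamma M ^ 2 / (M-1) :=
    div_pos (pow_pos (Real.Gamma_pos_of_pos hM0) 2) (by linarith)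
  -- continuity of various integrand factors
  have hcontwf : Continuous (wf M n) := by unfold wf; fun_prop
  have hcontpsi : Continuous (psif M n) := by unfold psif; fun_prop
  have hcontwfr : Continuous (fun s => wf M n (n - s)) := by unfold wf; fun_prop
  have hcontA : ContinuousOn (fun s => Kk M n s *
      (Real.Gamma (M+1) * Real.Gamma (M-1) * ((M-1-(n-s))*(M-(n-s))))) (Icc L H) :=
    hcontK.mul (by fun_prop)
  have hcontB : ContinuousOn (fun s => Kk M n s *
      (Real.Gamma M * Real.Gamma M * ((M-s)*(M-(n-s))))) (Icc L H) :=
    hcontK.mul (by fun_prop)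
  have hi1 := hintMaster _ hcontA
  have hi2 := hintMaster _ hcontB
  have hiKw := hintMaster _ (hcontK.mul hcontwf.continuousOn)
  have hiKwr := hintMaster _ (hcontK.mul hcontwfr.continuousOn)
  have hiKψ := hintMaster _ (hcontK.mul hcontpsi.continuousOn)
  have hiKw2 : IntegrableOn (fun s => Kk M n s * wf M n s) (Icc L H) volume :=
    (hcontK.mul hcontwf.continuousOn).integrableOn_Icc
  have hiKwr2 : IntegrableOn (fun s => Kk M n s * wf M n (n - s)) (Icc L H) volume :=
    (hcontK.mul hcontwfr.continuousOn).integrableOn_Icc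
  have hiKψ2 : IntegrableOn (fun s => Kk M n s * psif M n s) (Icc L H) volume :=
    (hcontK.mul hcontpsi.continuousOn).integrableOn_Icc
  -- reduce to positivity of the weighted integral
  suffices hfinal : 0 ≤ ∫ s in Icc L H, α s * α (n-s) * (Kk M n s * wf M n s) by
    have hsub := integral_sub hi2 hi1
    have hptw : (fun s => α s * α (n-s) * (Kk M n s *
          (Real.Gamma M * Real.Gamma M * ((M-s)*(M-(n-s)))))
        - α s * α (n-s) * (Kk M n s *
          (Real.Gamma (M+1) * Real.Gamma (M-1) * ((M-1-(n-s))*(M-(n-s))))))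
        = fun s => (Real.Gamma M ^ 2 / (M-1)) * (α s * α (n-s) * (Kk M n s * wf M n s)) := by
      funext s
      linear_combination (α s * α (n-s) * Kk M n s) * hBA s
    rw [hptw] at hsub
    rw [integral_const_mul] at hsub
    nlinarith [mul_nonneg hcΓpos.le hfinal]
  -- symmetrization
  have hreflKw : (∫ s in Icc L H, α s * α (n-s) * (Kk M n s * wf M n (n-s)))
      = ∫ s in Icc L H, α s * α (n-s) * (Kk M n s * wf M n s) := by
    have h := hrefl (fun s => α s * α (n - s) * (Kk M n s * wf M n s))
    rw [← h]
    apply setIntegral_congr_fun measurableSet_Icc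
    intro s _
    dsimp only
    rw [show n - (n - s) = s by ring, hKsym s]
    ring
  have hwpsi : ∀ s : ℝ, wf M n s + wf M n (n - s) = 2 * psif M n s := by
    intro s; unfold wf psif; ring
  have hPsiEq : (∫ s in Icc L H, α s * α (n-s) * (Kk M n s * psif M n s))
      = ∫ s in Icc L H, α s * α (n-s) * (Kk M n s * wf M n s) := by
    have hcongr : (fun s => α s * α (n-s) * (Kk M n s * psif M n s))
        = fun s => (α s * α (n-s) * (Kk M n s * wf M n s)
          + α s * α (n-s) * (Kk M n s * wf M n (n-s)))/2 := by
      funext s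
      linear_combination (-(α s * α (n-s) * Kk M n s) / 2) * hwpsi s
    have hiKw' : IntegrableOn (fun s => α s * α (n-s) * (Kk M n s * wf M n s)) (Icc L H) volume := hiKw
    have hiKwr' : IntegrableOn (fun s => α s * α (n-s) * (Kk M n s * wf M n (n-s))) (Icc L H) volume := hiKwr
    rw [hcongr, integral_div, integral_add hiKw' hiKwr', hreflKw]
    ring
  have hreflKw2 : (∫ s in Icc L H, Kk M n s * wf M n (n-s))
      = ∫ s in Icc L H, Kk M n s * wf M n s := by
    have h := hrefl (fun s => Kk M n s * wf M n s)
    rw [← h]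
    apply setIntegral_congr_fun measurableSet_Icc
    intro s _
    dsimp only
    rw [hKsym s]
  have hKψKw : (∫ s in Icc L H, Kk M n s * psif M n s)
      = ∫ s in Icc L H, Kk M n s * wf M n s := by
    have hcongr : (fun s => Kk M n s * psif M n s)
        = fun s => (Kk M n s * wf M n s + Kk M n s * wf M n (n-s))/2 := by
      funext s
      linear_combination (-(Kk M n s) / 2) * hwpsi s
    rw [hcongr, integral_div, integral_add hiKw2 hiKwr2, hreflKw2]
    ring
  -- Chebyshev-type pointwise inequality
  have hus0 : 0 ≤ n*(2*M-n)/(4*(2*M-1)) :=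
    div_nonneg (mul_nonneg hn0.le (by linarith)) (by linarith)
  have hus_sq : Real.sqrt (n*(2*M-n)/(4*(2*M-1))) ^ 2 = n*(2*M-n)/(4*(2*M-1)) :=
    Real.sq_sqrt hus0
  set us : ℝ := Real.sqrt (n*(2*M-n)/(4*(2*M-1))) with husdef
  set θ : ℝ := min us ((H - L)/2) with hθdef
  have hθ0 : 0 ≤ θ := le_min (Real.sqrt_nonneg _) (by linarith)
  have hc₀0 : 0 ≤ α (n/2 + θ) * α (n/2 - θ) := mul_nonneg (hα_nonneg _) (hα_nonneg _)
  have hPmono : ∀ u v : ℝ, 0 ≤ u → u ≤ v →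
      α (n/2+v) * α (n/2-v) ≤ α (n/2+u) * α (n/2-u) := by
    intro u v hu huv
    rcases eq_or_lt_of_le huv with rfl | huv
    · exact le_refl _
    have hv : 0 < v := lt_of_le_of_lt hu huv
    by_cases h1 : (n/2+v) ∈ Ioo (0:ℝ) M
    · by_cases h2 : (n/2-v) ∈ Ioo (0:ℝ) M
      · have hl0 : 0 < (v+u)/(2*v) := div_pos (by linarith) (by linarith)
        have hl1 : (v+u)/(2*v) < 1 := (div_lt_one (by linarith)).2 (by linarith)
        have hA := hα_logconcave _ h1 _ h2 ((v+u)/(2*v)) hl0 hl1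
        rw [show (v+u)/(2*v) * (n/2+v) + (1-(v+u)/(2*v))*(n/2-v) = n/2+u by
          field_simp; ring] at hA
        have hB := hα_logconcave _ h1 _ h2 (1-(v+u)/(2*v)) (by linarith) (by linarith)
        rw [show (1-(v+u)/(2*v)) * (n/2+v) + (1-(1-(v+u)/(2*v)))*(n/2-v) = n/2-u by
          field_simp; ring] at hB
        rw [show 1-(1-(v+u)/(2*v)) = (v+u)/(2*v) by ring] at hB
        have hrp : ∀ a : ℝ, 0 ≤ a → a ^ ((v+u)/(2*v)) * a ^ (1-(v+u)/(2*v)) = a := by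
          intro a ha
          rw [← Real.rpow_add' ha (by norm_num : (v+u)/(2*v) + (1-(v+u)/(2*v)) ≠ 0)]
          norm_num
        calc α (n/2+v) * α (n/2-v)
            = (α (n/2+v) ^ ((v+u)/(2*v)) * α (n/2-v) ^ (1-(v+u)/(2*v)))
              * (α (n/2+v) ^ (1-(v+u)/(2*v)) * α (n/2-v) ^ ((v+u)/(2*v))) := by
              rw [show (α (n/2+v) ^ ((v+u)/(2*v)) * α (n/2-v) ^ (1-(v+u)/(2*v)))
                  * (α (n/2+v) ^ (1-(v+u)/(2*v)) * α (n/2-v) ^ ((v+u)/(2*v)))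
                = (α (n/2+v) ^ ((v+u)/(2*v)) * α (n/2+v) ^ (1-(v+u)/(2*v)))
                  * (α (n/2-v) ^ ((v+u)/(2*v)) * α (n/2-v) ^ (1-(v+u)/(2*v))) by ring,
                hrp _ (hα_nonneg _), hrp _ (hα_nonneg _)]
          _ ≤ α (n/2+u) * α (n/2-u) := by
              apply mul_le_mul hA hB
                (mul_nonneg (Real.rpow_nonneg (hα_nonneg _) _) (Real.rpow_nonneg (hα_nonneg _) _))
                (hα_nonneg _)
      · rw [hα_zero _ h2, mul_zero]
        exact mul_nonneg (hα_nonneg _) (hα_nonneg _)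
    · rw [hα_zero _ h1, zero_mul]
      exact mul_nonneg (hα_nonneg _) (hα_nonneg _)
  have hcheb : ∀ s ∈ Icc L H,
      0 ≤ (α s * α (n-s) - α (n/2 + θ) * α (n/2 - θ)) * psif M n s := by
    intro s hs
    have hsn : α s * α (n-s) = α (n/2 + |s-n/2|) * α (n/2 - |s-n/2|) := by
      rcases abs_cases (s - n/2) with ⟨h, _⟩ | ⟨h, _⟩
      · rw [h, show n/2+(s-n/2) = s by ring, show n/2-(s-n/2) = n-s by ring]
      · rw [h, show n/2 + -(s-n/2) = n-s by ring, show n/2 - -(s-n/2) = s by ring, mul_comm]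
    have hu0 : 0 ≤ |s - n/2| := abs_nonneg _
    have huR : |s - n/2| ≤ (H-L)/2 := by
      rw [abs_le]
      refine ⟨by linarith [hs.1, hs.2], by linarith [hs.1, hs.2]⟩
    have hsqabs : (s - n/2)^2 = |s - n/2|^2 := (sq_abs _).symm
    have hmulpos : (0:ℝ) < 2*M-1 := by linarith
    have hcancel : (2*M-1) * (n*(2*M-n)/(4*(2*M-1))) = n*(2*M-n)/4 := by
      field_simp
    rcases le_or_gt (|s - n/2|) θ with hcase | hcase
    · have h1 : |s - n/2| ≤ us := le_trans hcase (min_le_left _ _)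
      have h2 : (s - n/2)^2 ≤ us^2 := by
        rw [hsqabs]; exact pow_le_pow_left₀ hu0 h1 2
      rw [hus_sq] at h2
      have hψ : 0 ≤ psif M n s := by
        unfold psif
        nlinarith [mul_le_mul_of_nonneg_left h2 hmulpos.le]
      have hP : α (n/2 + θ) * α (n/2 - θ) ≤ α s * α (n-s) := by
        rw [hsn]; exact hPmono _ θ hu0 hcase
      exact mul_nonneg (by linarith) hψ
    · have hθus : θ = us := by
        rcases le_total us ((H-L)/2) with h | h
        · rw [hθdef]; exact min_eq_left h
        · exfalso
          have : θ = (H-L)/2 := by rw [hθdef]; exact min_eq_right h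
          rw [this] at hcase; linarith
      have h1 : us ≤ |s - n/2| := by rw [← hθus]; exact hcase.le
      have h2 : us^2 ≤ (s - n/2)^2 := by
        rw [hsqabs]; exact pow_le_pow_left₀ (Real.sqrt_nonneg _) h1 2
      rw [hus_sq] at h2
      have hψ : psif M n s ≤ 0 := by
        unfold psif
        nlinarith [mul_le_mul_of_nonneg_left h2 hmulpos.le]
      have hP : α s * α (n-s) ≤ α (n/2 + θ) * α (n/2 - θ) := by
        rw [hsn]; exact hPmono θ _ hθ0 hcase.le
      exact mul_nonneg_iff.2 (Or.inr ⟨by linarith, hψ⟩)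
  -- Claim 2 : the unweighted integral is nonnegative (telescoping + reflection)
  have hclaim2 : 0 ≤ ∫ s in Icc L H, Kk M n s * wf M n s := by
    have hDtargs : ∀ s ∈ Icc (L-1) H, 0 < s+2 ∧ 0 < M-s+1 ∧ 0 < n-s+1 ∧ 0 < M-n+s+2 := by
      intro s hs
      obtain ⟨h1, h2⟩ := hs
      exact ⟨by linarith, by linarith, by linarith, by linarith⟩
    have hcontDt : ContinuousOn (Dt M n) (Icc (L-1) H) := by
      unfold Dt
      apply ContinuousOn.div (by fun_prop)
      · exact (((contOnGammaComp (by fun_prop) fun s hs => (hDtargs s hs).1).mul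
          (contOnGammaComp (by fun_prop) fun s hs => (hDtargs s hs).2.1)).mul
          (contOnGammaComp (by fun_prop) fun s hs => (hDtargs s hs).2.2.1)).mul
          (contOnGammaComp (by fun_prop) fun s hs => (hDtargs s hs).2.2.2)
      · intro s hs
        obtain ⟨a, b, c, d⟩ := hDtargs s hs
        have := Real.Gamma_pos_of_pos a; have := Real.Gamma_pos_of_pos b
        have := Real.Gamma_pos_of_pos c; have := Real.Gamma_pos_of_pos d
        positivity
    have hIIDt : ∀ a b : ℝ, a ∈ Icc (L-1) H → b ∈ Icc (L-1) H →
        IntervalIntegrable (Dt M n) volume a b := fun a b ha hb =>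
      (hcontDt.mono (uIcc_subset_Icc ha hb)).intervalIntegrable
    have hmemL1 : L - 1 ∈ Icc (L-1) H := ⟨le_refl _, by linarith⟩
    have hmemL : L ∈ Icc (L-1) H := ⟨by linarith, hLltH.le⟩
    have hmemH1 : H - 1 ∈ Icc (L-1) H := ⟨by linarith, by linarith⟩
    have hmemH : H ∈ Icc (L-1) H := ⟨by linarith, le_refl _⟩
    set a₀ : ℝ := max (H-1) 0 with ha₀def
    have ha₀H : a₀ ≤ H := max_le (by linarith) hH0.le
    have ha₀0 : 0 ≤ a₀ := le_max_right _ _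
    have ha₀H1 : H - 1 ≤ a₀ := le_max_left _ _
    have ha₀mem : a₀ ∈ Icc (L-1) H := ⟨by linarith, ha₀H⟩
    have h2a₀ : 0 ≤ 2*a₀ - n + 1 := by
      rcases le_total n 1 with h | h
      · linarith
      · have hH2 : (n+1)/2 ≤ H := le_min (by linarith) (by linarith)
        linarith
    have hMna₀ : 0 < M - n + a₀ + 1 := by
      rcases le_total n M with h | h
      · linarith
      · have hHM' : H = M := min_eq_right h
        rw [hHM'] at ha₀H1
        linarith
    have hptDt : ∀ x ∈ Icc a₀ H, 0 ≤ Dt M n x - Dt M n (n-1-x) := by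
      intro x hx
      refine sub_nonneg.2 (key_reflect M n x (le_trans ha₀0 hx.1)
        (le_trans hx.2 hHn) (le_trans hx.2 hHM) (by linarith [hx.1]) (by linarith [hx.1]))
    have hcontDtr : ContinuousOn (fun s => Dt M n (n-1-s)) (Icc (H-1) H) := by
      apply hcontDt.comp (by fun_prop : ContinuousOn (fun s : ℝ => n-1-s) (Icc (H-1) H))
      intro x hx
      exact (⟨by linarith [hx.2], by linarith [hx.1]⟩ : n - 1 - x ∈ Icc (L-1) H)
    have hIIDtr : ∀ a b : ℝ, a ∈ Icc (H-1) H → b ∈ Icc (H-1) H →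
        IntervalIntegrable (fun s => Dt M n (n-1-s)) volume a b := fun a b ha hb =>
      (hcontDtr.mono (uIcc_subset_Icc ha hb)).intervalIntegrable
    have hmemH1' : H - 1 ∈ Icc (H-1) H := ⟨le_refl _, by linarith⟩
    have hmemH' : H ∈ Icc (H-1) H := ⟨by linarith, le_refl _⟩
    have ha₀mem' : a₀ ∈ Icc (H-1) H := ⟨ha₀H1, ha₀H⟩
    have e0 : (∫ s in Icc L H, Kk M n s * wf M n s) = ∫ s in L..H, Kk M n s * wf M n s := by
      rw [intervalIntegral.integral_of_le hLltH.le, integral_Icc_eq_integral_Ioc]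
    have e1 : (∫ s in L..H, Kk M n s * wf M n s)
        = ∫ s in L..H, (Dt M n s - Dt M n (s-1)) := by
      apply intervalIntegral.integral_congr
      rw [Set.uIcc_of_le hLltH.le]
      intro s hs
      obtain ⟨p1, p2, p3, p4⟩ := hKargs s hs
      exact key_telescope M n s p1 p2 p3 p4
    have hIIsh : IntervalIntegrable (fun s => Dt M n (s-1)) volume L H := by
      apply ContinuousOn.intervalIntegrable
      rw [Set.uIcc_of_le hLltH.le]
      apply hcontDt.comp (by fun_prop : ContinuousOn (fun s : ℝ => s - 1) (Icc L H))
      intro x hx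
      exact (⟨by linarith [hx.1], by linarith [hx.2]⟩ : x - 1 ∈ Icc (L-1) H)
    have e2 : (∫ s in L..H, (Dt M n s - Dt M n (s-1)))
        = (∫ s in L..H, Dt M n s) - ∫ s in L..H, Dt M n (s-1) :=
      intervalIntegral.integral_sub (hIIDt L H hmemL hmemH) hIIsh
    have e3 : (∫ s in L..H, Dt M n (s-1)) = ∫ s in (L-1)..(H-1), Dt M n s :=
      intervalIntegral.integral_comp_sub_right (Dt M n) 1
    have e4 := intervalIntegral.integral_add_adjacent_intervals
      (hIIDt (L-1) L hmemL1 hmemL) (hIIDt L H hmemL hmemH)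
    have e5 := intervalIntegral.integral_add_adjacent_intervals
      (hIIDt (L-1) (H-1) hmemL1 hmemH1) (hIIDt (H-1) H hmemH1 hmemH)
    have e6 : (∫ s in (H-1)..H, Dt M n (n-1-s)) = ∫ s in (L-1)..L, Dt M n s := by
      rw [intervalIntegral.integral_comp_sub_left (Dt M n) (n-1),
        show n-1-H = L-1 by linarith, show n-1-(H-1) = L by linarith]
    have e7 : (∫ s in (H-1)..H, (Dt M n s - Dt M n (n-1-s)))
        = (∫ s in (H-1)..H, Dt M n s) - ∫ s in (H-1)..H, Dt M n (n-1-s) :=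
      intervalIntegral.integral_sub (hIIDt _ _ hmemH1 hmemH) (hIIDtr _ _ hmemH1' hmemH')
    have e8 := intervalIntegral.integral_add_adjacent_intervals
      (f := fun s => Dt M n s - Dt M n (n-1-s)) (μ := volume) (a := H-1) (b := a₀) (c := H)
      ((hIIDt _ _ hmemH1 ha₀mem).sub (hIIDtr _ _ hmemH1' ha₀mem'))
      ((hIIDt _ _ ha₀mem hmemH).sub (hIIDtr _ _ ha₀mem' hmemH'))
    have e9 : (∫ s in (H-1)..a₀, (Dt M n s - Dt M n (n-1-s))) = 0 := by
      have hcases : a₀ = H - 1 ∨ (n-1-a₀ = H-1 ∧ n-1-(H-1) = a₀) := by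
        rcases le_total 1 n with h | h
        · left
          rw [ha₀def]
          apply max_eq_left
          have h1H : 1 ≤ H := le_min h (by linarith)
          linarith
        · right
          have hHn' : H = n := min_eq_left (by linarith)
          have ha₀z : a₀ = 0 := by
            rw [ha₀def]; apply max_eq_right; linarith [hHn']
          constructor
          · rw [ha₀z, hHn']; ring
          · rw [ha₀z, hHn']; ring
      rcases hcases with h | ⟨hA, hB⟩
      · rw [h, intervalIntegral.integral_same]
      · have hsub : (∫ s in (H-1)..a₀, Dt M n (n-1-s)) = ∫ s in (H-1)..a₀, Dt M n s := by
          rw [intervalIntegral.integral_comp_sub_left (Dt M n) (n-1), hA, hB]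
        rw [intervalIntegral.integral_sub (hIIDt _ _ hmemH1 ha₀mem)
          (hIIDtr _ _ hmemH1' ha₀mem'), hsub, sub_self]
    have e10 : 0 ≤ ∫ s in a₀..H, (Dt M n s - Dt M n (n-1-s)) :=
      intervalIntegral.integral_nonneg ha₀H hptDt
    rw [e0, e1, e2, e3]
    linarith [e4, e5, e6, e7, e8, e9, e10]
  -- assemble everything
  have hchebInt : 0 ≤ ∫ s in Icc L H, (α s * α (n-s) * (Kk M n s * psif M n s)
      - (α (n/2 + θ) * α (n/2 - θ)) * (Kk M n s * psif M n s)) := by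
    apply setIntegral_nonneg measurableSet_Icc
    intro s hs
    have e : α s * α (n-s) * (Kk M n s * psif M n s)
        - (α (n/2 + θ) * α (n/2 - θ)) * (Kk M n s * psif M n s)
        = ((α s * α (n-s) - α (n/2 + θ) * α (n/2 - θ)) * psif M n s) * Kk M n s := by ring
    rw [e]
    exact mul_nonneg (hcheb s hs) (hKpos s hs).le
  have hsplit : (∫ s in Icc L H, (α s * α (n-s) * (Kk M n s * psif M n s)
      - (α (n/2 + θ) * α (n/2 - θ)) * (Kk M n s * psif M n s)))
      = (∫ s in Icc L H, α s * α (n-s) * (Kk M n s * psif M n s))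
        - (α (n/2 + θ) * α (n/2 - θ)) * ∫ s in Icc L H, Kk M n s * psif M n s := by
    have hiKψ' : IntegrableOn (fun s => α s * α (n-s) * (Kk M n s * psif M n s)) (Icc L H) volume := hiKψ
    rw [integral_sub hiKψ' (hiKψ2.const_mul _), integral_const_mul]
  have hlast : 0 ≤ (α (n/2 + θ) * α (n/2 - θ)) * ∫ s in Icc L H, Kk M n s * wf M n s :=
    mul_nonneg hc₀0 hclaim2
  have hKψKw' : (α (n/2 + θ) * α (n/2 - θ)) * (∫ s in Icc L H, Kk M n s * psif M n s)
      = (α (n/2 + θ) * α (n/2 - θ)) * ∫ s in Icc L H, Kk M n s * wf M n s := by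
    rw [hKψKw]
  linarith [hchebInt, hsplit, hPsiEq, hKψKw', hlast]
end
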